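/- arXiv:2602.08264 — 3 statements merged into one kernel-verified Lean document; each statement's English description precedes it below -/
import Mathlib

section
/- Let p be a prime and M ≥ 1 an integer. Then the Serganova map S₁ restricts to a bijection from the set A of dominant pairs onto the set 𝕄, with inverse given by the restriction of T₁ to 𝕄. -/
open Function

/-- The state of the Serganova algorithm: a pair `(λ, θ) ∈ ℤ^M × ℤ^{M+1}`.
Indices are 0-based, so the paper's `λ_i` (for `1 ≤ i ≤ M`) is `s.1 ⟨i-1,_⟩`
and the paper's `θ_j` (for `1 ≤ j ≤ M+1`) is `s.2 ⟨j-1,_⟩`. -/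
abbrev SState (M : ℕ) := (Fin M → ℤ) × (Fin (M + 1) → ℤ)

/-- One step of the Serganova algorithm, processing the (0-based) pair `(i, j)`:
if `λ_i + θ_j ≡ 0 (mod p)` nothing changes, otherwise `λ_i` is decreased by `1`
and `θ_j` is increased by `1`. -/
def sStep (p M : ℕ) (ij : Fin M × Fin (M + 1)) (s : SState M) : SState M :=
  if (p : ℤ) ∣ s.1 ij.1 + s.2 ij.2 then s
  else (Function.update s.1 ij.1 (s.1 ij.1 - 1),
        Function.update s.2 ij.2 (s.2 ij.2 + 1))

/-- One step of the inverse algorithm, processing the (0-based) pair `(i, j)`: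
if `λ_i + θ_j ≡ 0 (mod p)` nothing changes, otherwise `λ_i` is increased by `1`
and `θ_j` is decreased by `1`. -/
def tStep (p M : ℕ) (ij : Fin M × Fin (M + 1)) (s : SState M) : SState M :=
  if (p : ℤ) ∣ s.1 ij.1 + s.2 ij.2 then s
  else (Function.update s.1 ij.1 (s.1 ij.1 + 1),
        Function.update s.2 ij.2 (s.2 ij.2 - 1))

/-- Run the Serganova algorithm along a list of pairs. -/
def sRun (p M : ℕ) (l : List (Fin M × Fin (M + 1))) (s : SState M) : SState M :=
  l.foldl (fun s ij => sStep p M ij s) s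

/-- Run the inverse algorithm along a list of pairs. -/
def tRun (p M : ℕ) (l : List (Fin M × Fin (M + 1))) (s : SState M) : SState M :=
  l.foldl (fun s ij => tStep p M ij s) s

/-- The Version 1 order on the pair set `P = {(i,j) : 0 ≤ j ≤ i ≤ M-1}` (0-based):
`j` increasing, and for fixed `j`, `i` decreasing from `M-1` down to `j`.
This is the paper's order `(M,1),(M-1,1),…,(1,1),(M,2),…,(2,2),…,(M,M)`. -/
def order1 (M : ℕ) : List (Fin M × Fin (M + 1)) :=
  (List.finRange M).flatMap fun j =>
    ((List.finRange M).reverse.filter fun i => j ≤ i).map fun i => (i, j.castSucc)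

/-- The Version 2 order on the pair set `P` (0-based):
`i` decreasing from `M-1` down to `0`, and for fixed `i`, `j` increasing from `0` to `i`.
This is the paper's order `(M,1),(M,2),…,(M,M),(M-1,1),…,(M-1,M-1),…,(1,1)`. -/
def order2 (M : ℕ) : List (Fin M × Fin (M + 1)) :=
  (List.finRange M).reverse.flatMap fun i =>
    ((List.finRange M).filter fun j => j ≤ i).map fun j => (i, j.castSucc)

/-- The Serganova map `S₁` (Version 1 order). -/
def S1 (p M : ℕ) (s : SState M) : SState M := sRun p M (order1 M) s

/-- The Serganova map `S₂` (Version 2 order). -/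
def S2 (p M : ℕ) (s : SState M) : SState M := sRun p M (order2 M) s

/-- The inverse algorithm `T₁`: inverse steps, pairs processed in reverse Version 1 order. -/
def T1 (p M : ℕ) (s : SState M) : SState M := tRun p M (order1 M).reverse s

/-- The inverse algorithm `T₂`: inverse steps, pairs processed in reverse Version 2 order. -/
def T2 (p M : ℕ) (s : SState M) : SState M := tRun p M (order2 M).reverse s

/-- The set `A` of dominant pairs: `λ_1 ≥ … ≥ λ_M` and `θ_1 ≥ … ≥ θ_{M+1}`. -/
def domA (M : ℕ) : Set (SState M) := {s | Antitone s.1 ∧ Antitone s.2}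

/-- The set `𝕄`: dominant pairs such that (in 1-based terms) for `2 ≤ i ≤ M`,
`λ_{i-1} = λ_i → p ∣ λ_i + θ_i`, and for `1 ≤ i ≤ M`, `θ_i = θ_{i+1} → p ∣ λ_i + θ_i`. -/
def setM (p M : ℕ) : Set (SState M) :=
  {s | Antitone s.1 ∧ Antitone s.2 ∧
    (∀ (i : ℕ) (hi : i + 1 < M),
      s.1 ⟨i, by omega⟩ = s.1 ⟨i + 1, hi⟩ →
        (p : ℤ) ∣ s.1 ⟨i + 1, hi⟩ + s.2 ⟨i + 1, by omega⟩) ∧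
    (∀ (i : ℕ) (hi : i < M),
      s.2 ⟨i, by omega⟩ = s.2 ⟨i + 1, by omega⟩ →
        (p : ℤ) ∣ s.1 ⟨i, hi⟩ + s.2 ⟨i, by omega⟩)}


namespace SergAux


/-- One S-step on a value and counter. -/
def zstep (p : ℕ) (x t : ℤ) : ℤ × ℤ := if (p:ℤ) ∣ x + t then (x, t) else (x - 1, t + 1)

/-- One T-step on a value and counter. -/
def wstep (p : ℕ) (x t : ℤ) : ℤ × ℤ := if (p:ℤ) ∣ x + t then (x, t) else (x + 1, t - 1)

/-- S-column: processes the list from the tail towards the head (the head is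
the boundary element, processed last). -/
def zcol (p : ℕ) : List ℤ → ℤ → List ℤ × ℤ
  | [], t => ([], t)
  | x :: xs, t =>
    let r := zcol p xs t
    ((zstep p x r.2).1 :: r.1, (zstep p x r.2).2)

/-- T-column: processes the list from the head. -/
def wcol (p : ℕ) : List ℤ → ℤ → List ℤ × ℤ
  | [], t => ([], t)
  | x :: xs, t =>
    let r := wcol p xs (wstep p x t).2
    ((wstep p x t).1 :: r.1, r.2)

variable {p : ℕ}

lemma zstep_of_dvd {x t : ℤ} (h : (p:ℤ) ∣ x + t) : zstep p x t = (x, t) := by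
  simp [zstep, h]

lemma zstep_of_not_dvd {x t : ℤ} (h : ¬ (p:ℤ) ∣ x + t) : zstep p x t = (x - 1, t + 1) := by
  simp [zstep, h]

lemma zstep_fst_le (x t : ℤ) : (zstep p x t).1 ≤ x := by
  unfold zstep; split <;> simp <;> omega

lemma zstep_fst_ge (x t : ℤ) : x - 1 ≤ (zstep p x t).1 := by
  unfold zstep; split <;> simp

lemma zstep_snd_ge (x t : ℤ) : t ≤ (zstep p x t).2 := by
  unfold zstep; split <;> simp

lemma zstep_snd_le (x t : ℤ) : (zstep p x t).2 ≤ t + 1 := by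
  unfold zstep; split <;> simp

lemma zstep_snd_eq_iff (x t : ℤ) : (zstep p x t).2 = t ↔ (p:ℤ) ∣ x + t := by
  unfold zstep; split <;> simp_all <;> omega

lemma zstep_fst_eq_iff (x t : ℤ) : (zstep p x t).1 = x ↔ (p:ℤ) ∣ x + t := by
  unfold zstep; split <;> simp_all <;> omega

lemma wstep_of_dvd {x t : ℤ} (h : (p:ℤ) ∣ x + t) : wstep p x t = (x, t) := by
  simp [wstep, h]

lemma wstep_of_not_dvd {x t : ℤ} (h : ¬ (p:ℤ) ∣ x + t) : wstep p x t = (x + 1, t - 1) := by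
  simp [wstep, h]

lemma wstep_fst_ge (x t : ℤ) : x ≤ (wstep p x t).1 := by
  unfold wstep; split <;> simp

lemma wstep_fst_le (x t : ℤ) : (wstep p x t).1 ≤ x + 1 := by
  unfold wstep; split <;> simp <;> omega

lemma wstep_snd_le (x t : ℤ) : (wstep p x t).2 ≤ t := by
  unfold wstep; split <;> simp

lemma wstep_snd_ge (x t : ℤ) : t - 1 ≤ (wstep p x t).2 := by
  unfold wstep; split <;> simp

lemma wstep_fst_eq_iff (x t : ℤ) : (wstep p x t).1 = x ↔ (p:ℤ) ∣ x + t := by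
  unfold wstep; split <;> simp_all <;> omega

lemma wstep_snd_eq_iff (x t : ℤ) : (wstep p x t).2 = t ↔ (p:ℤ) ∣ x + t := by
  unfold wstep; split <;> simp_all <;> omega

lemma zcol_nil (t : ℤ) : zcol p [] t = ([], t) := rfl

lemma zcol_cons (x : ℤ) (xs : List ℤ) (t : ℤ) :
    zcol p (x :: xs) t =
      ((zstep p x (zcol p xs t).2).1 :: (zcol p xs t).1, (zstep p x (zcol p xs t).2).2) := rfl

lemma wcol_nil (t : ℤ) : wcol p [] t = ([], t) := rfl

lemma wcol_cons (x : ℤ) (xs : List ℤ) (t : ℤ) :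
    wcol p (x :: xs) t =
      ((wstep p x t).1 :: (wcol p xs (wstep p x t).2).1, (wcol p xs (wstep p x t).2).2) := rfl

lemma zcol_length (l : List ℤ) (t : ℤ) : (zcol p l t).1.length = l.length := by
  induction l generalizing t with
  | nil => rfl
  | cons x xs ih => simp [zcol_cons, ih]

lemma wcol_length (l : List ℤ) (t : ℤ) : (wcol p l t).1.length = l.length := by
  induction l generalizing t with
  | nil => rfl
  | cons x xs ih => simp [wcol_cons, ih]

lemma zcol_snd_ge (l : List ℤ) (t : ℤ) : t ≤ (zcol p l t).2 := by
  induction l generalizing t with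
  | nil => simp [zcol_nil]
  | cons x xs ih => simpa [zcol_cons] using le_trans (ih t) (zstep_snd_ge _ _)

lemma wcol_snd_le (l : List ℤ) (t : ℤ) : (wcol p l t).2 ≤ t := by
  induction l generalizing t with
  | nil => simp [wcol_nil]
  | cons x xs ih => simpa [wcol_cons] using le_trans (ih _) (wstep_snd_le x t)

/-- S-column preserves decreasing lists. -/
lemma zcol_chain {l : List ℤ} (t : ℤ) (h : l.Chain' (· ≥ ·)) :
    (zcol p l t).1.Chain' (· ≥ ·) := by
  induction l generalizing t with
  | nil => simp [zcol_nil, List.Chain']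
  | cons x xs ih =>
    cases xs with
    | nil => simp [zcol_cons, zcol_nil, List.Chain']
    | cons z zs =>
      have hxz : x ≥ z := (List.isChain_cons_cons.mp h).1
      have hch : (z :: zs).Chain' (· ≥ ·) := (List.isChain_cons_cons.mp h).2
      have ihz := ih t hch
      rw [zcol_cons] at ihz
      rw [zcol_cons, zcol_cons]
      refine List.isChain_cons_cons.mpr ⟨?_, ihz⟩
      set s₁ := (zcol p zs t).2 with hs₁
      by_cases h₁ : (p:ℤ) ∣ z + s₁
      · rw [zstep_of_dvd h₁]
        by_cases h₂ : (p:ℤ) ∣ x + s₁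
        · rw [zstep_of_dvd h₂]; exact hxz
        · rw [zstep_of_not_dvd h₂]
          have : x ≠ z := by rintro rfl; exact h₂ h₁
          simp only; omega
      · rw [zstep_of_not_dvd h₁]
        have h3 := zstep_fst_ge (p := p) x (s₁ + 1)
        simp only at h3 ⊢; omega

/-- T-column preserves decreasing lists. -/
lemma wcol_chain {l : List ℤ} (t : ℤ) (h : l.Chain' (· ≥ ·)) :
    (wcol p l t).1.Chain' (· ≥ ·) := by
  induction l generalizing t with
  | nil => simp [wcol_nil, List.Chain']
  | cons x xs ih =>
    cases xs with
    | nil => simp [wcol_cons, wcol_nil, List.Chain']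
    | cons z zs =>
      have hxz : x ≥ z := (List.isChain_cons_cons.mp h).1
      have hch : (z :: zs).Chain' (· ≥ ·) := (List.isChain_cons_cons.mp h).2
      have ihz := ih ((wstep p x t).2) hch
      rw [wcol_cons] at ihz
      rw [wcol_cons, wcol_cons]
      refine List.isChain_cons_cons.mpr ⟨?_, ihz⟩
      by_cases h₂ : (p:ℤ) ∣ x + t
      · rw [wstep_of_dvd h₂]
        by_cases h₁ : (p:ℤ) ∣ z + t
        · rw [wstep_of_dvd h₁]; exact hxz
        · rw [wstep_of_not_dvd h₁]
          have : x ≠ z := by rintro rfl; exact h₁ h₂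
          simp only; omega
      · rw [wstep_of_not_dvd h₂]
        have h3 := wstep_fst_le (p := p) z (t - 1)
        simp only at h3 ⊢; omega

/-- Coupling for S: running a column on the output of another column with a
smaller initial counter ends with a smaller counter. -/
lemma zcouple (l : List ℤ) (t t2 : ℤ) (h : t2 ≤ t) :
    (zcol p (zcol p l t).1 t2).2 ≤ (zcol p l t).2 := by
  induction l generalizing t t2 with
  | nil => simpa [zcol_nil] using h
  | cons x xs ih =>
    rw [zcol_cons, zcol_cons]
    set s := (zcol p xs t).2 with hs
    set u := (zcol p (zcol p xs t).1 t2).2 with hu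
    have hus : u ≤ s := ih t t2 h
    rcases lt_or_eq_of_le hus with hlt | heq
    · have h1 := zstep_snd_le (p := p) (zstep p x s).1 u
      have h2 := zstep_snd_ge (p := p) x s
      omega
    · rw [heq]
      by_cases hd : (p:ℤ) ∣ x + s
      · rw [zstep_of_dvd hd]; simp only
        rw [zstep_of_dvd hd]
      · rw [zstep_of_not_dvd hd]; simp only
        have := zstep_snd_le (p := p) (x-1) s
        omega

/-- Coupling for T. -/
lemma wcouple (l : List ℤ) (t t2 : ℤ) (h : t2 ≤ t) :
    (wcol p l t2).2 ≤ (wcol p (wcol p l t2).1 t).2 := by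
  induction l generalizing t t2 with
  | nil => simpa [wcol_nil] using h
  | cons x xs ih =>
    rw [wcol_cons, wcol_cons]
    set t2₁ := (wstep p x t2).2 with ht2₁
    set t₁ := (wstep p (wstep p x t2).1 t).2 with htt
    have key : t2₁ ≤ t₁ := by
      rcases lt_or_eq_of_le h with hlt | heq
      · have h1 := wstep_snd_ge (p := p) (wstep p x t2).1 t
        have h2 := wstep_snd_le (p := p) x t2
        omega
      · subst heq
        by_cases hd : (p:ℤ) ∣ x + t2
        · rw [ht2₁, htt, wstep_of_dvd hd]; simp only
          rw [wstep_of_dvd hd]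
        · rw [ht2₁, wstep_of_not_dvd hd]; simp only
          have := wstep_snd_ge (p := p) (wstep p x t2).1 t2
          omega
    exact le_trans (le_of_eq rfl) (ih t₁ t2₁ key)


/-- The full S algorithm on lists. -/
def zall (p : ℕ) : List ℤ → List ℤ → List ℤ × List ℤ
  | [], ths => ([], ths)
  | x :: xs, [] => (x :: xs, [])
  | x :: xs, t :: ts =>
    let y := (zstep p x (zcol p xs t).2).1
    let c := (zstep p x (zcol p xs t).2).2
    let r := zall p (zcol p xs t).1 ts
    (y :: r.1, c :: r.2)
  termination_by l _ => l.length
  decreasing_by simp [zcol_length]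

/-- The full T algorithm on lists. -/
def wall (p : ℕ) : List ℤ → List ℤ → List ℤ × List ℤ
  | [], ths => ([], ths)
  | x :: xs, [] => (x :: xs, [])
  | x :: xs, t :: ts =>
    let r := wall p xs ts
    ((wcol p (x :: r.1) t).1, (wcol p (x :: r.1) t).2 :: r.2)

variable {p : ℕ}

lemma zall_nil (ths : List ℤ) : zall p [] ths = ([], ths) := by
  cases ths <;> rw [zall]

lemma zall_cons (x : ℤ) (xs : List ℤ) (t : ℤ) (ts : List ℤ) :
    zall p (x :: xs) (t :: ts) =
      ((zstep p x (zcol p xs t).2).1 :: (zall p (zcol p xs t).1 ts).1,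
       (zstep p x (zcol p xs t).2).2 :: (zall p (zcol p xs t).1 ts).2) := by
  rw [zall]

lemma wall_nil (ths : List ℤ) : wall p [] ths = ([], ths) := by
  cases ths <;> rfl

lemma wall_cons (x : ℤ) (xs : List ℤ) (t : ℤ) (ts : List ℤ) :
    wall p (x :: xs) (t :: ts) =
      ((wcol p (x :: (wall p xs ts).1) t).1,
       (wcol p (x :: (wall p xs ts).1) t).2 :: (wall p xs ts).2) := rfl

lemma zall_length : ∀ (n : ℕ) (lam ths : List ℤ), lam.length = n →
    (zall p lam ths).1.length = lam.length ∧ (zall p lam ths).2.length = ths.length := by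
  intro n
  induction n with
  | zero =>
    intro lam ths hl
    rw [List.length_eq_zero_iff] at hl; subst hl
    simp [zall_nil]
  | succ n ih =>
    rintro lam ths hl
    obtain ⟨x, xs, rfl⟩ : ∃ x xs, lam = x :: xs := by
      cases lam with | nil => simp at hl | cons a b => exact ⟨a, b, rfl⟩
    cases ths with
    | nil => rw [zall]; simp
    | cons t ts =>
      rw [zall_cons]
      have hx : xs.length = n := by simpa using hl
      have := ih (zcol p xs t).1 ts (by rw [zcol_length]; exact hx)
      simp [this.1, this.2, zcol_length, hx]

lemma wall_length (lam ths : List ℤ) :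
    (wall p lam ths).1.length = lam.length ∧ (wall p lam ths).2.length = ths.length := by
  induction lam generalizing ths with
  | nil => simp [wall_nil]
  | cons x xs ih =>
    cases ths with
    | nil => rw [wall]; simp
    | cons t ts =>
      rw [wall_cons]
      have := ih ts
      simp [wcol_length, this.1, this.2]

/-- The 𝕄 conditions on lists. -/
def mcond (p : ℕ) (lam ths : List ℤ) : Prop :=
  (∀ i, i + 1 < lam.length → lam.getD i 0 = lam.getD (i+1) 0 →
    (p:ℤ) ∣ lam.getD (i+1) 0 + ths.getD (i+1) 0) ∧
  (∀ i, i < lam.length → ths.getD i 0 = ths.getD (i+1) 0 →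
    (p:ℤ) ∣ lam.getD i 0 + ths.getD i 0)

lemma mcond_tail {x t : ℤ} {xs ts : List ℤ} (h : mcond p (x :: xs) (t :: ts)) :
    mcond p xs ts := by
  obtain ⟨h1, h2⟩ := h
  constructor
  · intro i hi he
    have := h1 (i+1) (by simpa using Nat.succ_lt_succ hi) (by simpa using he)
    simpa using this
  · intro i hi he
    have := h2 (i+1) (by simpa using Nat.succ_lt_succ hi) (by simpa using he)
    simpa using this

/-- Main S theorem on lists. -/
theorem zall_good : ∀ (n : ℕ) (lam ths : List ℤ), lam.length = n →
    ths.length = n + 1 → lam.Chain' (· ≥ ·) → ths.Chain' (· ≥ ·) →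
    (zall p lam ths).1.Chain' (· ≥ ·) ∧ (zall p lam ths).2.Chain' (· ≥ ·) ∧
      mcond p (zall p lam ths).1 (zall p lam ths).2 := by
  intro n
  induction n with
  | zero =>
    intro lam ths hl _ _ hths
    rw [List.length_eq_zero_iff] at hl; subst hl
    rw [zall_nil]
    exact ⟨by simp [List.Chain'], hths, by simp [mcond], by simp [mcond]⟩
  | succ n ih =>
    rintro lam ths hl hts hcl hct
    obtain ⟨x, xs, rfl⟩ : ∃ x xs, lam = x :: xs := by
      cases lam with | nil => simp at hl | cons a b => exact ⟨a, b, rfl⟩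
    obtain ⟨t, ts, rfl⟩ : ∃ t ts, ths = t :: ts := by
      cases ths with | nil => simp at hts | cons a b => exact ⟨a, b, rfl⟩
    obtain ⟨t2, us, rfl⟩ : ∃ t2 us, ts = t2 :: us := by
      cases ts with
      | nil => exfalso; simp only [List.length_cons, List.length_nil] at hts; omega
      | cons a b => exact ⟨a, b, rfl⟩
    simp only [List.length_cons] at hl hts
    have hxs_len : xs.length = n := by omega
    have hus_len : us.length = n := by omega
    have hxs_ch : xs.Chain' (· ≥ ·) := hcl.tail
    have hts_ch : (t2 :: us).Chain' (· ≥ ·) := hct.tail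
    have htt2 : t2 ≤ t := (List.isChain_cons_cons.mp hct).1
    rcases hc : zcol p xs t with ⟨ys, s⟩
    rcases hy : zstep p x s with ⟨y, t'⟩
    have hcol : zcol p (x :: xs) t = (y :: ys, t') := by rw [zcol_cons, hc]; simp [hy]
    have hout : zall p (x :: xs) (t :: t2 :: us) =
        (y :: (zall p ys (t2 :: us)).1, t' :: (zall p ys (t2 :: us)).2) := by
      rw [zall_cons, hc]; simp [hy]
    have hys_len : ys.length = n := by
      have := zcol_length (p := p) xs t
      rw [hc] at this
      simp only at this
      omega
    have hys_ch : ys.Chain' (· ≥ ·) := by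
      have := zcol_chain (p := p) t hxs_ch; rwa [hc] at this
    obtain ⟨hr1, hr2, hrm⟩ := ih ys (t2 :: us) hys_len (by simpa using hus_len) hys_ch hts_ch
    have hst : t ≤ s := by have := zcol_snd_ge (p := p) xs t; rwa [hc] at this
    have hst' : s ≤ t' := by have := zstep_snd_ge (p := p) x s; rwa [hy] at this
    have hty : y ≤ x := by have := zstep_fst_le (p := p) x s; rwa [hy] at this
    have hty2 : x - 1 ≤ y := by have := zstep_fst_ge (p := p) x s; rwa [hy] at this
    have hfull_ch : (y :: ys).Chain' (· ≥ ·) := by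
      have := zcol_chain (p := p) t hcl; rwa [hcol] at this
    -- the divisibility fact used by the θ-condition at the boundary
    have hdvd_of_t'_eq_s : t' = s → (p:ℤ) ∣ x + s ∧ y = x := by
      intro hts'
      have hd : (p:ℤ) ∣ x + s := by
        rw [← zstep_snd_eq_iff (p := p) x s, hy]; exact hts'
      have h2 := zstep_of_dvd (p := p) hd
      rw [hy, Prod.mk.injEq] at h2
      exact ⟨hd, h2.1⟩
    rw [hout]
    rcases xs with _ | ⟨z₀, zs₀⟩
    · -- xs = []
      have : (([] : List ℤ), t) = (ys, s) := by rw [← hc, zcol_nil]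
      rw [Prod.mk.injEq] at this
      obtain ⟨hys_nil, hs_t⟩ := this
      rw [← hys_nil]
      rw [zall_nil]
      refine ⟨by simp [List.Chain'], List.isChain_cons_cons.mpr ⟨by omega, hts_ch⟩, ?_, ?_⟩
      · intro i hi; simp at hi
      · intro i hi he
        simp only [List.length_singleton, Nat.lt_one_iff] at hi
        subst hi
        simp only [List.getD_cons_zero, List.getD_cons_succ] at he ⊢
        obtain ⟨hd, hyx⟩ := hdvd_of_t'_eq_s (by omega)
        rw [hyx, show t' = s by omega]
        exact hd
    · -- xs = z₀ :: zs₀, so ys = z :: zs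
      rcases hc₁ : zcol p zs₀ t with ⟨zs, s₁⟩
      rcases hz : zstep p z₀ s₁ with ⟨z, s'⟩
      have : (z :: zs, s') = (ys, s) := by
        rw [← hc, zcol_cons, hc₁]; simp [hz]
      rw [Prod.mk.injEq] at this
      obtain ⟨hys_eq, hs_eq⟩ := this
      rw [hs_eq] at hz
      rcases hσ : zcol p zs t2 with ⟨ws, σ⟩
      rcases hwst : zstep p z σ with ⟨w, c2⟩
      have hr_unfold : zall p ys (t2 :: us) =
          (w :: (zall p ws us).1, c2 :: (zall p ws us).2) := by
        rw [← hys_eq, zall_cons, hσ]; simp [hwst]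
      have hcouple : c2 ≤ s := by
        have h0 := zcouple (p := p) (z₀ :: zs₀) t t2 htt2
        rw [hc] at h0
        simp only at h0
        rw [← hys_eq, zcol_cons, hσ] at h0
        simp only at h0
        rw [hwst] at h0
        exact h0
      have hwz : w ≤ z := by have := zstep_fst_le (p := p) z σ; rwa [hwst] at this
      have hyz : y ≥ z := by
        rw [← hys_eq] at hfull_ch
        exact (List.isChain_cons_cons.mp hfull_ch).1
      rw [hr_unfold]
      rw [hr_unfold] at hr1 hr2 hrm
      refine ⟨?_, ?_, ?_, ?_⟩
      · exact List.isChain_cons_cons.mpr ⟨by omega, hr1⟩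
      · exact List.isChain_cons_cons.mpr ⟨by omega, hr2⟩
      · -- λ-condition
        intro i hi he
        cases i with
        | zero =>
          simp only [List.getD_cons_zero, List.getD_cons_succ] at he ⊢
          by_cases hβ : (p:ℤ) ∣ z + σ
          · have := zstep_of_dvd (p := p) hβ
            rw [hwst] at this
            injection this with e1 e2
            rw [e1, e2]; exact hβ
          · exfalso
            have hq := zstep_of_not_dvd (p := p) hβ
            rw [hwst, Prod.mk.injEq] at hq
            obtain ⟨e1, e2⟩ := hq
            have hxz₀ : x ≥ z₀ := (List.isChain_cons_cons.mp hcl).1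
            have hzz₀ : z ≤ z₀ := by
              have := zstep_fst_le (p := p) z₀ s₁; rwa [hz] at this
            -- y = w = z - 1 forces equalities
            have hz_eq : z = z₀ := by omega
            have hy_ne : y ≠ x := by omega
            have hnd : ¬ (p:ℤ) ∣ x + s := by
              rw [← zstep_fst_eq_iff (p := p) x s, hy]; exact hy_ne
            have hd1 : (p:ℤ) ∣ z₀ + s₁ := by
              rw [← zstep_fst_eq_iff (p := p) z₀ s₁, hz]; simp only; omega
            have hs_s₁ : s = s₁ := by
              have hq := zstep_of_dvd (p := p) hd1
              rw [hz, Prod.mk.injEq] at hq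
              omega
            rw [show x = z₀ by omega, hs_s₁] at hnd
            exact hnd hd1
        | succ i =>
          simp only [List.getD_cons_succ] at he ⊢
          simp only [List.length_cons] at hi
          exact hrm.1 i (by simp only [List.length_cons]; omega) he
      · -- θ-condition
        intro i hi he
        cases i with
        | zero =>
          simp only [List.getD_cons_zero, List.getD_cons_succ] at he ⊢
          obtain ⟨hd, hyx⟩ := hdvd_of_t'_eq_s (by omega)
          rw [hyx, show t' = s by omega]
          exact hd
        | succ i =>
          simp only [List.getD_cons_succ] at he ⊢
          simp only [List.length_cons] at hi
          exact hrm.2 i (by simp only [List.length_cons]; omega) he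


/-- Main T theorem on lists. -/
theorem wall_good : ∀ (lam ths : List ℤ), ths.length = lam.length + 1 →
    lam.Chain' (· ≥ ·) → ths.Chain' (· ≥ ·) → mcond p lam ths →
    (wall p lam ths).1.Chain' (· ≥ ·) ∧ (wall p lam ths).2.Chain' (· ≥ ·) := by
  intro lam
  induction lam with
  | nil =>
    intro ths _ _ hct _
    rw [wall_nil]
    exact ⟨by simp [List.Chain'], hct⟩
  | cons x xs ih =>
    intro ths hlen hcl hct hm
    obtain ⟨t, ts, rfl⟩ : ∃ t ts, ths = t :: ts := by
      cases ths with | nil => simp at hlen | cons a b => exact ⟨a, b, rfl⟩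
    have hts_len : ts.length = xs.length + 1 := by simpa using hlen
    have hm2 : t = ts.getD 0 0 → (p:ℤ) ∣ x + t := by
      have := hm.2 0 (by simp)
      simpa using this
    have htt2 : t ≥ ts.getD 0 0 := by
      cases ts with
      | nil => simp at hts_len
      | cons a b => exact (List.isChain_cons_cons.mp hct).1
    obtain ⟨hr1, hr2⟩ := ih ts hts_len hcl.tail hct.tail (mcond_tail hm)
    rw [wall_cons]
    rcases xs with _ | ⟨z, zs⟩
    · -- xs = []
      obtain ⟨t2, rfl⟩ : ∃ t2, ts = [t2] := by
        cases ts with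
        | nil => simp at hts_len
        | cons a b =>
          cases b with
          | nil => exact ⟨a, rfl⟩
          | cons c d => simp at hts_len
      rw [wall_nil]
      simp only
      rw [wcol_cons, wcol_nil]
      refine ⟨by simp [List.Chain'], List.isChain_cons_cons.mpr ⟨?_, by simp⟩⟩
      simp only
      by_cases hd : (p:ℤ) ∣ x + t
      · rw [wstep_of_dvd hd]; simpa using htt2
      · rw [wstep_of_not_dvd hd]
        simp only
        have : t ≠ t2 := by
          intro h; exact hd (hm2 (by simpa using h))
        simp only [List.getD_cons_zero] at htt2
        omega
    · -- xs = z :: zs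
      obtain ⟨t2, us, rfl⟩ : ∃ t2 us, ts = t2 :: us := by
        cases ts with | nil => simp at hts_len | cons a b => exact ⟨a, b, rfl⟩
      simp only [List.getD_cons_zero] at hm2 htt2
      have hm1 : x = z → (p:ℤ) ∣ z + t2 := by
        have := hm.1 0 (by simp)
        simpa using this
      have hxz : x ≥ z := (List.isChain_cons_cons.mp hcl).1
      -- unfold r := wall (z :: zs) (t2 :: us)
      rcases hw1 : wstep p z t2 with ⟨z', t2₁⟩
      have hrw : wall p (z :: zs) (t2 :: us) =
          (z' :: (wcol p (wall p zs us).1 t2₁).1,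
           (wcol p (wall p zs us).1 t2₁).2 :: (wall p zs us).2) := by
        rw [wall_cons, wcol_cons, hw1]
      rw [hrw] at hr1 hr2 ⊢
      set Q := (wcol p (wall p zs us).1 t2₁).1 with hQ
      set c₂ := (wcol p (wall p zs us).1 t2₁).2 with hc₂
      -- (I): x ≥ z'
      have hxz' : x ≥ z' := by
        by_cases hd : (p:ℤ) ∣ z + t2
        · have := wstep_of_dvd (p := p) hd; rw [hw1, Prod.mk.injEq] at this; omega
        · have := wstep_of_not_dvd (p := p) hd; rw [hw1, Prod.mk.injEq] at this
          have hne : x ≠ z := fun h => hd (hm1 h)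
          omega
      have hchain_in : (x :: z' :: Q).Chain' (· ≥ ·) := List.isChain_cons_cons.mpr ⟨hxz', hr1⟩
      constructor
      · exact wcol_chain t hchain_in
      · -- θ side
        rcases hwx : wstep p x t with ⟨x', t₁⟩
        have hout2 : (wcol p (x :: z' :: Q) t).2 = (wcol p (z' :: Q) t₁).2 := by
          rw [wcol_cons, hwx]
        have ht₁ : t2 ≤ t₁ := by
          by_cases hd : (p:ℤ) ∣ x + t
          · have := wstep_of_dvd (p := p) hd; rw [hwx, Prod.mk.injEq] at this; omega
          · have := wstep_of_not_dvd (p := p) hd; rw [hwx, Prod.mk.injEq] at this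
            have hne : t ≠ t2 := fun h => hd (hm2 h)
            omega
        have hcpl := wcouple (p := p) (z :: (wall p zs us).1) t₁ t2 ht₁
        have hBfull : wcol p (z :: (wall p zs us).1) t2 = (z' :: Q, c₂) := by
          rw [wcol_cons, hw1]
        rw [hBfull] at hcpl
        simp only at hcpl
        rw [hout2]
        exact List.isChain_cons_cons.mpr ⟨hcpl, hr2⟩


section Bridge

variable {p : ℕ}

/-- Generic step (covers both `sStep` and `tStep`). -/
def uvStep (p : ℕ) (u v : ℤ → ℤ) {M : ℕ} (ij : Fin M × Fin (M + 1)) (s : SState M) :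
    SState M :=
  if (p : ℤ) ∣ s.1 ij.1 + s.2 ij.2 then s
  else (Function.update s.1 ij.1 (u (s.1 ij.1)), Function.update s.2 ij.2 (v (s.2 ij.2)))

def uvRun (p : ℕ) (u v : ℤ → ℤ) {M : ℕ} (l : List (Fin M × Fin (M + 1))) (s : SState M) :
    SState M :=
  l.foldl (fun s ij => uvStep p u v ij s) s

lemma sRun_eq_uvRun {M : ℕ} (l : List (Fin M × Fin (M + 1))) (s : SState M) :
    sRun p M l s = uvRun p (· - 1) (· + 1) l s := rfl

lemma tRun_eq_uvRun {M : ℕ} (l : List (Fin M × Fin (M + 1))) (s : SState M) :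
    tRun p M l s = uvRun p (· + 1) (· - 1) l s := rfl

lemma uvRun_nil (u v : ℤ → ℤ) {M : ℕ} (s : SState M) : uvRun p u v [] s = s := rfl

lemma uvRun_cons (u v : ℤ → ℤ) {M : ℕ} (ij : Fin M × Fin (M + 1))
    (l : List (Fin M × Fin (M + 1))) (s : SState M) :
    uvRun p u v (ij :: l) s = uvRun p u v l (uvStep p u v ij s) := rfl

lemma uvRun_append (u v : ℤ → ℤ) {M : ℕ} (l l' : List (Fin M × Fin (M + 1)))
    (s : SState M) :
    uvRun p u v (l ++ l') s = uvRun p u v l' (uvRun p u v l s) := List.foldl_append ..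

/-- Pulling a run along injective reindexing maps. -/
lemma uvRun_emb (u v : ℤ → ℤ) {a M : ℕ} (e : Fin a → Fin M) (f : Fin (a + 1) → Fin (M + 1))
    (he : Function.Injective e) (hf : Function.Injective f)
    (l : List (Fin a × Fin (a + 1))) (s : SState M) :
    (uvRun p u v (l.map (Prod.map e f)) s).1 ∘ e = (uvRun p u v l (s.1 ∘ e, s.2 ∘ f)).1 ∧
    (uvRun p u v (l.map (Prod.map e f)) s).2 ∘ f = (uvRun p u v l (s.1 ∘ e, s.2 ∘ f)).2 ∧
    (∀ x, (∀ i, e i ≠ x) → (uvRun p u v (l.map (Prod.map e f)) s).1 x = s.1 x) ∧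
    (∀ y, (∀ j, f j ≠ y) → (uvRun p u v (l.map (Prod.map e f)) s).2 y = s.2 y) := by
  induction l generalizing s with
  | nil => exact ⟨rfl, rfl, fun _ _ => rfl, fun _ _ => rfl⟩
  | cons ij l ih =>
    obtain ⟨i, j⟩ := ij
    rw [List.map_cons, uvRun_cons, uvRun_cons]
    have hpull : ((uvStep p u v (Prod.map e f (i, j)) s).1 ∘ e,
        (uvStep p u v (Prod.map e f (i, j)) s).2 ∘ f) =
        uvStep p u v (i, j) (s.1 ∘ e, s.2 ∘ f) := by
      simp only [uvStep, Prod.map, Function.comp_apply]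
      by_cases hd : (p : ℤ) ∣ s.1 (e i) + s.2 (f j)
      · rw [if_pos hd, if_pos hd]
      · rw [if_neg hd, if_neg hd]
        simp only
        exact Prod.ext (Function.update_comp_eq_of_injective s.1 he i _)
          (Function.update_comp_eq_of_injective s.2 hf j _)
    have hoff1 : ∀ x, (∀ i', e i' ≠ x) →
        (uvStep p u v (Prod.map e f (i, j)) s).1 x = s.1 x := by
      intro x hx
      simp only [uvStep, Prod.map]
      split
      · rfl
      · exact Function.update_of_ne (fun h => hx i h.symm) _ _
    have hoff2 : ∀ y, (∀ j', f j' ≠ y) →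
        (uvStep p u v (Prod.map e f (i, j)) s).2 y = s.2 y := by
      intro y hy
      simp only [uvStep, Prod.map]
      split
      · rfl
      · exact Function.update_of_ne (fun h => hy j h.symm) _ _
    obtain ⟨g1, g2, g3, g4⟩ := ih (uvStep p u v (Prod.map e f (i, j)) s)
    refine ⟨?_, ?_, ?_, ?_⟩
    · rw [g1, show (uvStep p u v (Prod.map e f (i, j)) s).1 ∘ e = (uvStep p u v (i,j) (s.1 ∘ e, s.2 ∘ f)).1 from congrArg Prod.fst hpull, show (uvStep p u v (Prod.map e f (i, j)) s).2 ∘ f = (uvStep p u v (i,j) (s.1 ∘ e, s.2 ∘ f)).2 from congrArg Prod.snd hpull]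
    · rw [g2, show (uvStep p u v (Prod.map e f (i, j)) s).1 ∘ e = (uvStep p u v (i,j) (s.1 ∘ e, s.2 ∘ f)).1 from congrArg Prod.fst hpull, show (uvStep p u v (Prod.map e f (i, j)) s).2 ∘ f = (uvStep p u v (i,j) (s.1 ∘ e, s.2 ∘ f)).2 from congrArg Prod.snd hpull]
    · intro x hx; rw [g3 x hx, hoff1 x hx]
    · intro y hy; rw [g4 y hy, hoff2 y hy]

/-- step inverse lemmas -/
lemma tStep_sStep {M : ℕ} (ij : Fin M × Fin (M + 1)) (s : SState M) :
    tStep p M ij (sStep p M ij s) = s := by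
  by_cases hd : (p : ℤ) ∣ s.1 ij.1 + s.2 ij.2
  · rw [sStep, if_pos hd, tStep, if_pos hd]
  · rw [sStep, if_neg hd, tStep]
    simp only [Function.update_self]
    rw [if_neg (by rw [show s.1 ij.1 - 1 + (s.2 ij.2 + 1) = s.1 ij.1 + s.2 ij.2 by ring]; exact hd)]
    simp only [Function.update_self, Function.update_idem]
    rw [show s.1 ij.1 - 1 + 1 = s.1 ij.1 by ring, show s.2 ij.2 + 1 - 1 = s.2 ij.2 by ring,
      Function.update_eq_self, Function.update_eq_self]

lemma sStep_tStep {M : ℕ} (ij : Fin M × Fin (M + 1)) (s : SState M) :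
    sStep p M ij (tStep p M ij s) = s := by
  by_cases hd : (p : ℤ) ∣ s.1 ij.1 + s.2 ij.2
  · rw [tStep, if_pos hd, sStep, if_pos hd]
  · rw [tStep, if_neg hd, sStep]
    simp only [Function.update_self]
    rw [if_neg (by rw [show s.1 ij.1 + 1 + (s.2 ij.2 - 1) = s.1 ij.1 + s.2 ij.2 by ring]; exact hd)]
    simp only [Function.update_self, Function.update_idem]
    rw [show s.1 ij.1 + 1 - 1 = s.1 ij.1 by ring, show s.2 ij.2 - 1 + 1 = s.2 ij.2 by ring,
      Function.update_eq_self, Function.update_eq_self]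

lemma tRun_sRun {M : ℕ} (l : List (Fin M × Fin (M + 1))) (s : SState M) :
    tRun p M l.reverse (sRun p M l s) = s := by
  induction l generalizing s with
  | nil => rfl
  | cons a l ih =>
    rw [List.reverse_cons]
    show tRun p M (l.reverse ++ [a]) (sRun p M l (sStep p M a s)) = s
    rw [show tRun p M (l.reverse ++ [a]) (sRun p M l (sStep p M a s)) =
      tStep p M a (tRun p M l.reverse (sRun p M l (sStep p M a s))) from List.foldl_append ..]
    rw [ih (sStep p M a s), tStep_sStep]

lemma sRun_tRun {M : ℕ} (l : List (Fin M × Fin (M + 1))) (s : SState M) :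
    sRun p M l (tRun p M l.reverse s) = s := by
  induction l generalizing s with
  | nil => rfl
  | cons a l ih =>
    rw [List.reverse_cons]
    show sRun p M (a :: l) (tRun p M (l.reverse ++ [a]) s) = s
    rw [show tRun p M (l.reverse ++ [a]) s =
      tStep p M a (tRun p M l.reverse s) from List.foldl_append ..]
    show sRun p M l (sStep p M a (tStep p M a (tRun p M l.reverse s))) = s
    rw [sStep_tStep, ih]

lemma sStep_fst_other {M : ℕ} (ij : Fin M × Fin (M + 1)) (s : SState M) {x : Fin M}
    (hx : x ≠ ij.1) : (sStep p M ij s).1 x = s.1 x := by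
  by_cases hd : (p : ℤ) ∣ s.1 ij.1 + s.2 ij.2
  · rw [sStep, if_pos hd]
  · rw [sStep, if_neg hd]
    show Function.update s.1 ij.1 (s.1 ij.1 - 1) x = s.1 x
    exact Function.update_of_ne hx _ _

lemma sStep_snd_other {M : ℕ} (ij : Fin M × Fin (M + 1)) (s : SState M) {y : Fin (M + 1)}
    (hy : y ≠ ij.2) : (sStep p M ij s).2 y = s.2 y := by
  by_cases hd : (p : ℤ) ∣ s.1 ij.1 + s.2 ij.2
  · rw [sStep, if_pos hd]
  · rw [sStep, if_neg hd]
    show Function.update s.2 ij.2 (s.2 ij.2 + 1) y = s.2 y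
    exact Function.update_of_ne hy _ _

lemma tStep_fst_other {M : ℕ} (ij : Fin M × Fin (M + 1)) (s : SState M) {x : Fin M}
    (hx : x ≠ ij.1) : (tStep p M ij s).1 x = s.1 x := by
  by_cases hd : (p : ℤ) ∣ s.1 ij.1 + s.2 ij.2
  · rw [tStep, if_pos hd]
  · rw [tStep, if_neg hd]
    show Function.update s.1 ij.1 (s.1 ij.1 + 1) x = s.1 x
    exact Function.update_of_ne hx _ _

lemma tStep_snd_other {M : ℕ} (ij : Fin M × Fin (M + 1)) (s : SState M) {y : Fin (M + 1)}
    (hy : y ≠ ij.2) : (tStep p M ij s).2 y = s.2 y := by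
  by_cases hd : (p : ℤ) ∣ s.1 ij.1 + s.2 ij.2
  · rw [tStep, if_pos hd]
  · rw [tStep, if_neg hd]
    show Function.update s.2 ij.2 (s.2 ij.2 - 1) y = s.2 y
    exact Function.update_of_ne hy _ _

lemma sStep_fst_self {M : ℕ} (ij : Fin M × Fin (M + 1)) (s : SState M) :
    (sStep p M ij s).1 ij.1 = (zstep p (s.1 ij.1) (s.2 ij.2)).1 := by
  by_cases hd : (p : ℤ) ∣ s.1 ij.1 + s.2 ij.2
  · rw [sStep, if_pos hd, zstep_of_dvd hd]
  · rw [sStep, if_neg hd, zstep_of_not_dvd hd]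
    show Function.update s.1 ij.1 (s.1 ij.1 - 1) ij.1 = _
    rw [Function.update_self]

lemma sStep_snd_self {M : ℕ} (ij : Fin M × Fin (M + 1)) (s : SState M) :
    (sStep p M ij s).2 ij.2 = (zstep p (s.1 ij.1) (s.2 ij.2)).2 := by
  by_cases hd : (p : ℤ) ∣ s.1 ij.1 + s.2 ij.2
  · rw [sStep, if_pos hd, zstep_of_dvd hd]
  · rw [sStep, if_neg hd, zstep_of_not_dvd hd]
    show Function.update s.2 ij.2 (s.2 ij.2 + 1) ij.2 = _
    rw [Function.update_self]

lemma tStep_fst_self {M : ℕ} (ij : Fin M × Fin (M + 1)) (s : SState M) :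
    (tStep p M ij s).1 ij.1 = (wstep p (s.1 ij.1) (s.2 ij.2)).1 := by
  by_cases hd : (p : ℤ) ∣ s.1 ij.1 + s.2 ij.2
  · rw [tStep, if_pos hd, wstep_of_dvd hd]
  · rw [tStep, if_neg hd, wstep_of_not_dvd hd]
    show Function.update s.1 ij.1 (s.1 ij.1 + 1) ij.1 = _
    rw [Function.update_self]

lemma tStep_snd_self {M : ℕ} (ij : Fin M × Fin (M + 1)) (s : SState M) :
    (tStep p M ij s).2 ij.2 = (wstep p (s.1 ij.1) (s.2 ij.2)).2 := by
  by_cases hd : (p : ℤ) ∣ s.1 ij.1 + s.2 ij.2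
  · rw [tStep, if_pos hd, wstep_of_dvd hd]
  · rw [tStep, if_neg hd, wstep_of_not_dvd hd]
    show Function.update s.2 ij.2 (s.2 ij.2 - 1) ij.2 = _
    rw [Function.update_self]

end Bridge

section Bridge2

variable {p : ℕ}

lemma sRun_nil {M : ℕ} (s : SState M) : sRun p M [] s = s := rfl

lemma sRun_cons {M : ℕ} (ij : Fin M × Fin (M + 1)) (l : List (Fin M × Fin (M + 1)))
    (s : SState M) : sRun p M (ij :: l) s = sRun p M l (sStep p M ij s) := rfl

lemma sRun_append {M : ℕ} (l l' : List (Fin M × Fin (M + 1))) (s : SState M) :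
    sRun p M (l ++ l') s = sRun p M l' (sRun p M l s) := List.foldl_append ..

lemma tRun_nil {M : ℕ} (s : SState M) : tRun p M [] s = s := rfl

lemma tRun_cons {M : ℕ} (ij : Fin M × Fin (M + 1)) (l : List (Fin M × Fin (M + 1)))
    (s : SState M) : tRun p M (ij :: l) s = tRun p M l (tStep p M ij s) := rfl

lemma tRun_append {M : ℕ} (l l' : List (Fin M × Fin (M + 1))) (s : SState M) :
    tRun p M (l ++ l') s = tRun p M l' (tRun p M l s) := List.foldl_append ..

lemma sRun_emb {a M : ℕ} (e : Fin a → Fin M) (f : Fin (a + 1) → Fin (M + 1))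
    (he : Function.Injective e) (hf : Function.Injective f)
    (l : List (Fin a × Fin (a + 1))) (s : SState M) :
    (sRun p M (l.map (Prod.map e f)) s).1 ∘ e = (sRun p a l (s.1 ∘ e, s.2 ∘ f)).1 ∧
    (sRun p M (l.map (Prod.map e f)) s).2 ∘ f = (sRun p a l (s.1 ∘ e, s.2 ∘ f)).2 ∧
    (∀ x, (∀ i, e i ≠ x) → (sRun p M (l.map (Prod.map e f)) s).1 x = s.1 x) ∧
    (∀ y, (∀ j, f j ≠ y) → (sRun p M (l.map (Prod.map e f)) s).2 y = s.2 y) := by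
  have := uvRun_emb (p := p) (· - 1) (· + 1) e f he hf l s
  rw [← sRun_eq_uvRun, ← sRun_eq_uvRun] at this
  exact this

lemma tRun_emb {a M : ℕ} (e : Fin a → Fin M) (f : Fin (a + 1) → Fin (M + 1))
    (he : Function.Injective e) (hf : Function.Injective f)
    (l : List (Fin a × Fin (a + 1))) (s : SState M) :
    (tRun p M (l.map (Prod.map e f)) s).1 ∘ e = (tRun p a l (s.1 ∘ e, s.2 ∘ f)).1 ∧
    (tRun p M (l.map (Prod.map e f)) s).2 ∘ f = (tRun p a l (s.1 ∘ e, s.2 ∘ f)).2 ∧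
    (∀ x, (∀ i, e i ≠ x) → (tRun p M (l.map (Prod.map e f)) s).1 x = s.1 x) ∧
    (∀ y, (∀ j, f j ≠ y) → (tRun p M (l.map (Prod.map e f)) s).2 y = s.2 y) := by
  have := uvRun_emb (p := p) (· + 1) (· - 1) e f he hf l s
  rw [← tRun_eq_uvRun, ← tRun_eq_uvRun] at this
  exact this

/-- The column-0 processing list. -/
def colList0 (M : ℕ) : List (Fin M × Fin (M + 1)) :=
  (List.finRange M).reverse.map (fun i => (i, 0))

lemma colList0_zero : colList0 0 = [] := rfl

lemma colList0_succ (n : ℕ) :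
    colList0 (n + 1) = (colList0 n).map (Prod.map Fin.succ Fin.castSucc) ++ [(0, 0)] := by
  unfold colList0
  rw [List.finRange_succ, List.reverse_cons, List.map_append, ← List.map_reverse,
    List.map_map, List.map_map]
  have e1 : List.map ((fun i => (i, (0 : Fin (n+2)))) ∘ Fin.succ) (List.finRange n).reverse
      = List.map (Prod.map Fin.succ Fin.castSucc ∘ fun i => (i, (0 : Fin (n+1)))) (List.finRange n).reverse :=
    List.map_congr_left (fun i _ => by simp [Prod.map])
  rw [e1]
  simp

lemma order1_zero : order1 0 = [] := rfl

lemma order1_succ (n : ℕ) :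
    order1 (n + 1) = colList0 (n + 1) ++ (order1 n).map (Prod.map Fin.succ Fin.succ) := by
  unfold order1
  rw [List.finRange_succ, List.flatMap_cons]
  have hcol : (((0 : Fin (n+1)) :: List.map Fin.succ (List.finRange n)).reverse.filter
        (fun i => (0:Fin (n+1)) ≤ i)).map (fun i => (i, (0:Fin (n+1)).castSucc))
      = colList0 (n + 1) := by
    rw [List.filter_eq_self.mpr (by intro a _; simpa using Fin.zero_le a)]
    rw [colList0_succ]
    unfold colList0
    rw [List.reverse_cons, List.map_append, ← List.map_reverse, List.map_map, List.map_map]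
    have e1 : List.map ((fun i => (i, (0:Fin (n+1)).castSucc)) ∘ Fin.succ) (List.finRange n).reverse
        = List.map (Prod.map Fin.succ Fin.castSucc ∘ fun i => (i, (0 : Fin (n+1)))) (List.finRange n).reverse :=
      List.map_congr_left (fun i _ => by simp [Prod.map])
    rw [e1]
    simp
  rw [hcol]
  congr 1
  rw [List.map_flatMap, List.flatMap_map]
  refine congrArg (fun f => List.flatMap f (List.finRange n)) ?_
  funext j
  rw [List.reverse_cons, ← List.map_reverse, List.filter_append, List.filter_map]
  have h1 : List.filter (fun i => decide (j.succ ≤ i)) [(0 : Fin (n+1))] = [] := by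
    simp [List.filter, Fin.le_zero_iff, Fin.succ_ne_zero]
  have h2 : List.filter ((fun i => decide (j.succ ≤ i)) ∘ Fin.succ) (List.finRange n).reverse
      = List.filter (fun i => decide (j ≤ i)) (List.finRange n).reverse := by
    apply List.filter_congr
    intro a _
    simp [Fin.succ_le_succ_iff]
  rw [h1, h2, List.append_nil, List.map_map, List.map_map]
  apply List.map_congr_left
  intro i _
  simp [Prod.map, Fin.succ_castSucc, -Fin.castSucc_succ]

/-- Column bridge for S. -/
lemma colS_bridge : ∀ (M : ℕ) (s : SState M),
    List.ofFn (sRun p M (colList0 M) s).1 = (zcol p (List.ofFn s.1) (s.2 0)).1 ∧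
    (sRun p M (colList0 M) s).2 0 = (zcol p (List.ofFn s.1) (s.2 0)).2 ∧
    ∀ j : Fin M, (sRun p M (colList0 M) s).2 j.succ = s.2 j.succ := by
  intro M
  induction M with
  | zero =>
    intro s
    refine ⟨by simp [colList0_zero, sRun_nil, zcol_nil], by simp [colList0_zero, sRun_nil, zcol_nil], fun j => Fin.elim0 j⟩
  | succ n ih =>
    intro s
    obtain ⟨E1, E2, E3, E4⟩ := sRun_emb (p := p) Fin.succ Fin.castSucc
      (Fin.succ_injective n) (Fin.castSucc_injective (n+1)) (colList0 n) s
    set s₁ := sRun p (n+1) ((colList0 n).map (Prod.map Fin.succ Fin.castSucc)) s with hs₁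
    set r := sRun p n (colList0 n) (s.1 ∘ Fin.succ, s.2 ∘ Fin.castSucc) with hr
    obtain ⟨I1, I2, I3⟩ := ih (s.1 ∘ Fin.succ, s.2 ∘ Fin.castSucc)
    set xs := List.ofFn (s.1 ∘ Fin.succ) with hxs
    set t := s.2 0 with ht
    have hc0 : ((s.1 ∘ Fin.succ, s.2 ∘ Fin.castSucc) : SState n).2 0 = t := by
      simp [Function.comp, ht]
    rw [hc0] at I1 I2
    set c := (zcol p xs t).2 with hc
    have f10 : s₁.1 0 = s.1 0 := E3 0 (fun i => Fin.succ_ne_zero i)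
    have θ0 : s₁.2 0 = c := by
      have : s₁.2 (Fin.castSucc 0) = r.2 0 := congrFun E2 0
      rw [Fin.castSucc_zero] at this
      rw [this, I2]
    have hrun : sRun p (n+1) (colList0 (n+1)) s = sStep p (n+1) (0, 0) s₁ := by
      rw [colList0_succ, sRun_append]; rfl
    rw [hrun]
    set fin := sStep p (n+1) (0, 0) s₁ with hfin
    have hofn : List.ofFn s.1 = s.1 0 :: xs := by
      rw [List.ofFn_succ]; rfl
    have hzc : zcol p (List.ofFn s.1) t =
        ((zstep p (s.1 0) c).1 :: (zcol p xs t).1, (zstep p (s.1 0) c).2) := by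
      rw [hofn, zcol_cons, ← hc]
    have hdvd_iff : ((p:ℤ) ∣ s₁.1 (0 : Fin (n+1)) + s₁.2 (0 : Fin (n+2))) ↔ ((p:ℤ) ∣ s.1 0 + c) := by
      rw [f10, θ0]
    have hhead : fin.1 0 = (zstep p (s.1 0) c).1 := by
      rw [hfin, sStep_fst_self (p := p) ((0 : Fin (n+1)), (0 : Fin (n+2))) s₁]
      simp only [f10, θ0]
    have htail : (fun i : Fin n => fin.1 i.succ) = r.1 := by
      funext i
      have h1 : fin.1 i.succ = s₁.1 i.succ := by
        rw [hfin]; exact sStep_fst_other _ _ (Fin.succ_ne_zero i)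
      rw [h1]
      exact congrFun E1 i
    have hsnd0 : fin.2 0 = (zstep p (s.1 0) c).2 := by
      rw [hfin, sStep_snd_self (p := p) ((0 : Fin (n+1)), (0 : Fin (n+2))) s₁]
      simp only [f10, θ0]
    refine ⟨?_, ?_, ?_⟩
    · rw [List.ofFn_succ, hzc]
      simp only
      rw [hhead]
      congr 1
      rw [show (fun i : Fin n => fin.1 i.succ) = r.1 from htail, I1]
    · rw [hzc, hsnd0]
    · intro j
      have h1 : fin.2 j.succ = s₁.2 j.succ := by
        rw [hfin]; exact sStep_snd_other _ _ (Fin.succ_ne_zero j)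
      rw [h1]
      induction j using Fin.lastCases with
      | last =>
        rw [Fin.succ_last]
        exact E4 (Fin.last (n+1)) (fun j' => Fin.ne_last_of_lt (Fin.castSucc_lt_last j'))
      | cast j'' =>
        rw [Fin.succ_castSucc]
        have h2 : s₁.2 (Fin.castSucc j''.succ) = r.2 j''.succ := congrFun E2 j''.succ
        rw [h2, I3 j'']
        rfl

end Bridge2

section Bridge3

variable {p : ℕ}

lemma colList0_rev_succ (n : ℕ) :
    (colList0 (n+1)).reverse = ((0 : Fin (n+1)), (0 : Fin (n+2))) ::
      ((colList0 n).reverse.map (Prod.map Fin.succ Fin.castSucc)) := by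
  rw [colList0_succ, List.reverse_append, ← List.map_reverse]
  rfl

/-- Column bridge for T. -/
lemma colT_bridge : ∀ (M : ℕ) (s : SState M),
    List.ofFn (tRun p M (colList0 M).reverse s).1 = (wcol p (List.ofFn s.1) (s.2 0)).1 ∧
    (tRun p M (colList0 M).reverse s).2 0 = (wcol p (List.ofFn s.1) (s.2 0)).2 ∧
    ∀ j : Fin M, (tRun p M (colList0 M).reverse s).2 j.succ = s.2 j.succ := by
  intro M
  induction M with
  | zero =>
    intro s
    refine ⟨by simp [colList0_zero, tRun_nil, wcol_nil],
      by simp [colList0_zero, tRun_nil, wcol_nil], fun j => Fin.elim0 j⟩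
  | succ n ih =>
    intro s
    rw [colList0_rev_succ, tRun_cons]
    set s₁ := tStep p (n+1) ((0 : Fin (n+1)), (0 : Fin (n+2))) s with hs₁
    obtain ⟨E1, E2, E3, E4⟩ := tRun_emb (p := p) Fin.succ Fin.castSucc
      (Fin.succ_injective n) (Fin.castSucc_injective (n+1)) ((colList0 n).reverse) s₁
    set res := tRun p (n+1) ((colList0 n).reverse.map (Prod.map Fin.succ Fin.castSucc)) s₁
      with hres
    set r := tRun p n (colList0 n).reverse (s₁.1 ∘ Fin.succ, s₁.2 ∘ Fin.castSucc) with hrr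
    obtain ⟨I1, I2, I3⟩ := ih (s₁.1 ∘ Fin.succ, s₁.2 ∘ Fin.castSucc)
    set x := s.1 0 with hx
    set t := s.2 0 with ht
    have hx' : s₁.1 0 = (wstep p x t).1 := tStep_fst_self _ s
    have ht₁ : s₁.2 0 = (wstep p x t).2 := tStep_snd_self _ s
    have hfun1 : (s₁.1 ∘ Fin.succ) = (fun i : Fin n => s.1 i.succ) := by
      funext i
      exact tStep_fst_other _ _ (Fin.succ_ne_zero i)
    have hc0 : ((s₁.1 ∘ Fin.succ, s₁.2 ∘ Fin.castSucc) : SState n).2 0 = (wstep p x t).2 := by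
      show s₁.2 (Fin.castSucc 0) = _
      rw [Fin.castSucc_zero, ht₁]
    rw [hc0] at I1 I2
    have hIfst : ((s₁.1 ∘ Fin.succ, s₁.2 ∘ Fin.castSucc) : SState n).1 = s₁.1 ∘ Fin.succ := rfl
    set xs := List.ofFn (fun i : Fin n => s.1 i.succ) with hxs
    have hofn1 : List.ofFn (s₁.1 ∘ Fin.succ) = xs := by rw [hfun1]
    rw [hofn1] at I1 I2
    have hofn : List.ofFn s.1 = x :: xs := List.ofFn_succ
    have hwc : wcol p (List.ofFn s.1) t =
        ((wstep p x t).1 :: (wcol p xs (wstep p x t).2).1, (wcol p xs (wstep p x t).2).2) := by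
      rw [hofn, wcol_cons]
    refine ⟨?_, ?_, ?_⟩
    · rw [List.ofFn_succ, hwc]
      simp only
      congr 1
      · rw [E3 0 (fun i => Fin.succ_ne_zero i), hx']
      · rw [show (fun i : Fin n => res.1 i.succ) = r.1 from funext (fun i => congrFun E1 i), I1]
    · rw [hwc]
      simp only
      have : res.2 (Fin.castSucc 0) = r.2 0 := congrFun E2 0
      rw [Fin.castSucc_zero] at this
      rw [this, I2]
    · intro j
      induction j using Fin.lastCases with
      | last =>
        rw [Fin.succ_last]
        have h1 : res.2 (Fin.last (n+1)) = s₁.2 (Fin.last (n+1)) :=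
          E4 (Fin.last (n+1)) (fun j' => Fin.ne_last_of_lt (Fin.castSucc_lt_last j'))
        rw [h1, hs₁]
        exact tStep_snd_other _ _ (by simp [Fin.ext_iff])
      | cast j'' =>
        rw [Fin.succ_castSucc]
        have h2 : res.2 (Fin.castSucc j''.succ) = r.2 j''.succ := congrFun E2 j''.succ
        rw [h2, I3 j'']
        show s₁.2 (Fin.castSucc j''.succ) = s.2 (Fin.castSucc j''.succ)
        rw [hs₁]
        refine tStep_snd_other _ _ ?_
        simp [Fin.ext_iff]

end Bridge3

section MainBridge

variable {p : ℕ}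

lemma S1_bridge : ∀ (M : ℕ) (s : SState M),
    List.ofFn (S1 p M s).1 = (zall p (List.ofFn s.1) (List.ofFn s.2)).1 ∧
    List.ofFn (S1 p M s).2 = (zall p (List.ofFn s.1) (List.ofFn s.2)).2 := by
  intro M
  induction M with
  | zero =>
    intro s
    have h1 : List.ofFn s.1 = [] := by simp
    rw [h1]
    rw [show S1 p 0 s = s from rfl, zall_nil]
    exact ⟨h1, rfl⟩
  | succ n ih =>
    intro s
    have hrun : S1 p (n+1) s = sRun p (n+1) ((order1 n).map (Prod.map Fin.succ Fin.succ))
        (sRun p (n+1) (colList0 (n+1)) s) := by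
      rw [S1, order1_succ, sRun_append]
    set s₁ := sRun p (n+1) (colList0 (n+1)) s with hs₁
    obtain ⟨C1, C2, C3⟩ := colS_bridge (p := p) (n+1) s
    rw [← hs₁] at C1 C2 C3
    obtain ⟨E1, E2, E3, E4⟩ := sRun_emb (p := p) Fin.succ Fin.succ
      (Fin.succ_injective n) (Fin.succ_injective (n+1)) (order1 n) s₁
    set res := sRun p (n+1) ((order1 n).map (Prod.map Fin.succ Fin.succ)) s₁ with hres
    set q : SState n := (s₁.1 ∘ Fin.succ, s₁.2 ∘ Fin.succ) with hq
    obtain ⟨I1, I2⟩ := ih q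
    set x := s.1 0 with hx
    set t := s.2 0 with ht
    set xs := List.ofFn (fun i : Fin n => s.1 i.succ) with hxs
    set ts := List.ofFn (fun j : Fin (n+1) => s.2 j.succ) with hts
    have hofn1 : List.ofFn s.1 = x :: xs := List.ofFn_succ
    have hofn2 : List.ofFn s.2 = t :: ts := List.ofFn_succ
    have hzc : zcol p (List.ofFn s.1) t =
        ((zstep p x (zcol p xs t).2).1 :: (zcol p xs t).1,
         (zstep p x (zcol p xs t).2).2) := by
      rw [hofn1, zcol_cons]
    -- decompose C1
    rw [List.ofFn_succ, hzc] at C1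
    simp only at C1
    rw [List.cons.injEq] at C1
    obtain ⟨hy, hY⟩ := C1
    rw [hzc] at C2
    simp only at C2
    -- sub input lists
    have hq1 : List.ofFn q.1 = (zcol p xs t).1 := by
      rw [← hY]
      congr 1
    have hq2 : List.ofFn q.2 = ts := by
      rw [hts]
      congr 1
      funext j
      exact C3 j
    rw [hq1, hq2] at I1 I2
    have hzall : zall p (List.ofFn s.1) (List.ofFn s.2) =
        ((zstep p x (zcol p xs t).2).1 :: (zall p (zcol p xs t).1 ts).1,
         (zstep p x (zcol p xs t).2).2 :: (zall p (zcol p xs t).1 ts).2) := by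
      rw [hofn1, hofn2, zall_cons]
    rw [hrun, hzall]
    constructor
    · rw [List.ofFn_succ]
      congr 1
      · rw [E3 0 (fun i => Fin.succ_ne_zero i), hy]
      · rw [show (fun i : Fin n => res.1 i.succ) = (S1 p n q).1
            from funext (fun i => congrFun E1 i)]
        exact I1
    · rw [List.ofFn_succ]
      congr 1
      · rw [E4 0 (fun j => Fin.succ_ne_zero j), C2]
      · rw [show (fun j : Fin (n+1) => res.2 j.succ) = (S1 p n q).2
            from funext (fun j => congrFun E2 j)]
        exact I2

lemma T1_bridge : ∀ (M : ℕ) (s : SState M),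
    List.ofFn (T1 p M s).1 = (wall p (List.ofFn s.1) (List.ofFn s.2)).1 ∧
    List.ofFn (T1 p M s).2 = (wall p (List.ofFn s.1) (List.ofFn s.2)).2 := by
  intro M
  induction M with
  | zero =>
    intro s
    have h1 : List.ofFn s.1 = [] := by simp
    rw [h1]
    rw [show T1 p 0 s = s from rfl, wall_nil]
    exact ⟨h1, rfl⟩
  | succ n ih =>
    intro s
    have hrun : T1 p (n+1) s = tRun p (n+1) (colList0 (n+1)).reverse
        (tRun p (n+1) ((order1 n).reverse.map (Prod.map Fin.succ Fin.succ)) s) := by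
      rw [T1, order1_succ, List.reverse_append, tRun_append, List.map_reverse]
    set s₁ := tRun p (n+1) ((order1 n).reverse.map (Prod.map Fin.succ Fin.succ)) s with hs₁
    obtain ⟨E1, E2, E3, E4⟩ := tRun_emb (p := p) Fin.succ Fin.succ
      (Fin.succ_injective n) (Fin.succ_injective (n+1)) (order1 n).reverse s
    rw [← hs₁] at E1 E2 E3 E4
    set q : SState n := (s.1 ∘ Fin.succ, s.2 ∘ Fin.succ) with hq
    obtain ⟨I1, I2⟩ := ih q
    set x := s.1 0 with hx
    set t := s.2 0 with ht
    set xs := List.ofFn (fun i : Fin n => s.1 i.succ) with hxs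
    set ts := List.ofFn (fun j : Fin (n+1) => s.2 j.succ) with hts
    have hofn1 : List.ofFn s.1 = x :: xs := List.ofFn_succ
    have hofn2 : List.ofFn s.2 = t :: ts := List.ofFn_succ
    have hq1 : List.ofFn q.1 = xs := by rw [hxs]; congr 1
    have hq2 : List.ofFn q.2 = ts := by rw [hts]; congr 1
    rw [hq1, hq2] at I1 I2
    -- T1 p n q is literally tRun over (order1 n).reverse
    have hsub : tRun p n (order1 n).reverse (s.1 ∘ Fin.succ, s.2 ∘ Fin.succ) = T1 p n q := rfl
    rw [hsub] at E1 E2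
    obtain ⟨D1, D2, D3⟩ := colT_bridge (p := p) (n+1) s₁
    have hofns₁ : List.ofFn s₁.1 = x :: (wall p xs ts).1 := by
      rw [List.ofFn_succ]
      congr 1
      · rw [E3 0 (fun i => Fin.succ_ne_zero i)]
      · rw [show (fun i : Fin n => s₁.1 i.succ) = (T1 p n q).1
            from funext (fun i => congrFun E1 i)]
        exact I1
    have hθ0 : s₁.2 0 = t := E4 0 (fun j => Fin.succ_ne_zero j)
    have hwall : wall p (List.ofFn s.1) (List.ofFn s.2) =
        ((wcol p (x :: (wall p xs ts).1) t).1,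
         (wcol p (x :: (wall p xs ts).1) t).2 :: (wall p xs ts).2) := by
      rw [hofn1, hofn2, wall_cons]
    rw [hrun, hwall]
    rw [hofns₁, hθ0] at D1 D2
    constructor
    · exact D1
    · rw [List.ofFn_succ]
      refine congrArg₂ List.cons ?_ ?_
      · exact D2
      · have : (fun j : Fin (n+1) => (tRun p (n+1) (colList0 (n+1)).reverse s₁).2 j.succ)
            = (fun j : Fin (n+1) => s₁.2 j.succ) := funext (fun j => D3 j)
        rw [this]
        rw [show (fun j : Fin (n+1) => s₁.2 j.succ) = (T1 p n q).2
            from funext (fun j => congrFun E2 j)]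
        exact I2

end MainBridge

section Final

variable {p : ℕ}

lemma antitone_iff_chain' {M : ℕ} (g : Fin M → ℤ) :
    Antitone g ↔ (List.ofFn g).Chain' (· ≥ ·) := by
  cases M with
  | zero =>
    constructor
    · intro _; simp [List.Chain']
    · intro _ i j _; exact i.elim0
  | succ n =>
    rw [Fin.antitone_iff_succ_le, show (List.ofFn g).Chain' (· ≥ ·) ↔ _ from List.isChain_iff_getElem]
    constructor
    · intro h i hi
      simp only [List.length_ofFn] at hi
      have := h ⟨i, by omega⟩
      rw [Fin.succ_mk, Fin.castSucc_mk] at this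
      simp only [List.get_eq_getElem, List.getElem_ofFn]
      exact this
    · intro h i
      have := h i.1 (by simp only [List.length_ofFn]; omega)
      simp only [List.get_eq_getElem, List.getElem_ofFn] at this
      rw [show i.castSucc = ⟨i.1, by omega⟩ from Fin.ext rfl,
        show i.succ = ⟨i.1 + 1, by omega⟩ from Fin.ext rfl]
      exact this

lemma getD_ofFn {M : ℕ} (g : Fin M → ℤ) (i : ℕ) (h : i < M) :
    (List.ofFn g).getD i 0 = g ⟨i, h⟩ := by
  rw [List.getD_eq_getElem _ _ (by simpa using h), List.getElem_ofFn]

lemma mcond_iff {M : ℕ} (s : SState M) :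
    mcond p (List.ofFn s.1) (List.ofFn s.2) ↔
    ((∀ (i : ℕ) (hi : i + 1 < M),
      s.1 ⟨i, by omega⟩ = s.1 ⟨i + 1, hi⟩ →
        (p : ℤ) ∣ s.1 ⟨i + 1, hi⟩ + s.2 ⟨i + 1, by omega⟩) ∧
    (∀ (i : ℕ) (hi : i < M),
      s.2 ⟨i, by omega⟩ = s.2 ⟨i + 1, by omega⟩ →
        (p : ℤ) ∣ s.1 ⟨i, hi⟩ + s.2 ⟨i, by omega⟩)) := by
  unfold mcond
  constructor
  · rintro ⟨h1, h2⟩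
    constructor
    · intro i hi he
      have := h1 i (by simpa using hi)
        (by rw [getD_ofFn s.1 i (by omega), getD_ofFn s.1 (i+1) (by omega)]; exact he)
      rwa [getD_ofFn s.1 (i+1) (by omega), getD_ofFn s.2 (i+1) (by omega)] at this
    · intro i hi he
      have := h2 i (by simpa using hi)
        (by rw [getD_ofFn s.2 i (by omega), getD_ofFn s.2 (i+1) (by omega)]; exact he)
      rwa [getD_ofFn s.1 i (by omega), getD_ofFn s.2 i (by omega)] at this
  · rintro ⟨h1, h2⟩
    constructor
    · intro i hi he
      simp only [List.length_ofFn] at hi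
      rw [getD_ofFn s.1 (i+1) (by omega), getD_ofFn s.2 (i+1) (by omega)]
      rw [getD_ofFn s.1 i (by omega), getD_ofFn s.1 (i+1) (by omega)] at he
      exact h1 i hi he
    · intro i hi he
      simp only [List.length_ofFn] at hi
      rw [getD_ofFn s.1 i (by omega), getD_ofFn s.2 i (by omega)]
      rw [getD_ofFn s.2 i (by omega), getD_ofFn s.2 (i+1) (by omega)] at he
      exact h2 i hi he

lemma maps_S (p M : ℕ) : Set.MapsTo (S1 p M) (domA M) (setM p M) := by
  intro s hs
  obtain ⟨h1, h2⟩ := hs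
  obtain ⟨B1, B2⟩ := S1_bridge (p := p) M s
  obtain ⟨G1, G2, G3⟩ := zall_good (p := p) M (List.ofFn s.1) (List.ofFn s.2)
    (by simp) (by simp) ((antitone_iff_chain' _).mp h1) ((antitone_iff_chain' _).mp h2)
  have hm : mcond p (List.ofFn (S1 p M s).1) (List.ofFn (S1 p M s).2) := by
    rw [B1, B2]; exact G3
  have hm' := (mcond_iff (p := p) (S1 p M s)).mp hm
  exact ⟨(antitone_iff_chain' _).mpr (B1 ▸ G1), (antitone_iff_chain' _).mpr (B2 ▸ G2),
    hm'.1, hm'.2⟩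

lemma maps_T (p M : ℕ) : Set.MapsTo (T1 p M) (setM p M) (domA M) := by
  intro s hs
  obtain ⟨h1, h2, h3, h4⟩ := hs
  obtain ⟨B1, B2⟩ := T1_bridge (p := p) M s
  obtain ⟨G1, G2⟩ := wall_good (p := p) (List.ofFn s.1) (List.ofFn s.2)
    (by simp) ((antitone_iff_chain' _).mp h1) ((antitone_iff_chain' _).mp h2)
    ((mcond_iff (p := p) s).mpr ⟨h3, h4⟩)
  exact ⟨(antitone_iff_chain' _).mpr (B1 ▸ G1), (antitone_iff_chain' _).mpr (B2 ▸ G2)⟩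

lemma T1_S1 (p M : ℕ) (s : SState M) : T1 p M (S1 p M s) = s := tRun_sRun (order1 M) s

lemma S1_T1 (p M : ℕ) (s : SState M) : S1 p M (T1 p M s) = s := sRun_tRun (order1 M) s

end Final

end SergAux

/-- `S₁` restricts to a bijection from `A` onto `𝕄`, with inverse
given by the restriction of `T₁` to `𝕄`. -/
theorem serganova_bijOn (p M : ℕ) (hp : p.Prime) (hM : 1 ≤ M) :
    Set.BijOn (S1 p M) (domA M) (setM p M) ∧
    Set.InvOn (T1 p M) (S1 p M) (domA M) (setM p M) := by
  refine ⟨⟨SergAux.maps_S p M, ?_, ?_⟩, fun s _ => SergAux.T1_S1 p M s,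
    fun s _ => SergAux.S1_T1 p M s⟩
  · exact Set.LeftInvOn.injOn (f₁' := T1 p M) (fun s _ => SergAux.T1_S1 p M s)
  · intro m hm
    exact ⟨T1 p M m, SergAux.maps_T p M hm, SergAux.S1_T1 p M m⟩
end

section
/- Let p be a prime and let M, N be integers with 0 ≤ M and N > M + 1. Let Ŝ : ℤ^M × ℤ^N → ℤ^M × ℤ^N be the map given by applying the Serganova algorithm S₁ to (λ, (θ_1,…,θ_{M+1})) and leaving the entries θ_{M+2},…,θ_N unchanged. Let Â ⊆ ℤ^M × ℤ^N be the set of pairs with λ_1 ≥ … ≥ λ_M and θ_1 ≥ θ_2 ≥ … ≥ θ_N, and let 𝕄̂ ⊆ ℤ^M × ℤ^N be the set of pairs satisfying λ_1 ≥ … ≥ λ_M, θ_1 ≥ θ_2 ≥ … ≥ θ_N, and: for 1 ≤ i ≤ M, θ_i = θ_{i+1} implies θ_i + λ_i ≡ 0 (mod p), and for 2 ≤ i ≤ M, λ_{i−1} = λ_i implies θ_i + λ_i ≡ 0 (mod p). Then Ŝ(Â) = 𝕄̂. -/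
open Function

/-- The state for the extended algorithm: a pair `(λ, θ) ∈ ℤ^M × ℤ^N` (0-based indices). -/
abbrev NState (M N : ℕ) := (Fin M → ℤ) × (Fin N → ℤ)

/-- One step of the Serganova algorithm at the (0-based) pair `(i, j)`:
if `λ_i + θ_j ≡ 0 (mod p)` nothing changes, otherwise `λ_i` is decreased by `1`
and `θ_j` is increased by `1`. -/
def nStep (p M N : ℕ) (ij : Fin M × Fin N) (s : NState M N) : NState M N :=
  if (p : ℤ) ∣ s.1 ij.1 + s.2 ij.2 then s
  else (Function.update s.1 ij.1 (s.1 ij.1 - 1),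
        Function.update s.2 ij.2 (s.2 ij.2 + 1))

/-- The extension `Ŝ` of the Serganova map `S₁` to `ℤ^M × ℤ^N` (for `M + 1 ≤ N`),
acting only on `λ` and the first `M+1` entries of `θ` and leaving `θ_{M+2},…,θ_N`
unchanged. -/
def Shat (p M N : ℕ) (h : M + 1 ≤ N) (s : NState M N) : NState M N :=
  ((order1 M).map fun ij => (ij.1, ij.2.castLE h)).foldl (fun s ij => nStep p M N ij s) s

/-- The set `Â ⊆ ℤ^M × ℤ^N` of dominant pairs: `λ_1 ≥ … ≥ λ_M`, `θ_1 ≥ … ≥ θ_N`. -/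
def domAhat (M N : ℕ) : Set (NState M N) := {s | Antitone s.1 ∧ Antitone s.2}

/-- The set `𝕄̂ ⊆ ℤ^M × ℤ^N`: dominant pairs such that (in 1-based terms)
for `1 ≤ i ≤ M`, `θ_i = θ_{i+1} → p ∣ θ_i + λ_i`, and for `2 ≤ i ≤ M`,
`λ_{i-1} = λ_i → p ∣ θ_i + λ_i`. -/
def setMhat (p M N : ℕ) (h : M + 1 ≤ N) : Set (NState M N) :=
  {s | Antitone s.1 ∧ Antitone s.2 ∧
    (∀ (i : ℕ) (hi : i < M),
      s.2 ⟨i, by omega⟩ = s.2 ⟨i + 1, by omega⟩ →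
        (p : ℤ) ∣ s.2 ⟨i, by omega⟩ + s.1 ⟨i, hi⟩) ∧
    (∀ (i : ℕ) (hi : i + 1 < M),
      s.1 ⟨i, by omega⟩ = s.1 ⟨i + 1, hi⟩ →
        (p : ℤ) ∣ s.2 ⟨i + 1, by omega⟩ + s.1 ⟨i + 1, hi⟩)}


namespace Serg

abbrev St := (ℕ → ℤ) × (ℕ → ℤ)

variable (p : ℕ)

def step (i j : ℕ) (s : St) : St :=
  if (p:ℤ) ∣ s.1 i + s.2 j then s
  else (Function.update s.1 i (s.1 i - 1), Function.update s.2 j (s.2 j + 1))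

def istep (i j : ℕ) (s : St) : St :=
  if (p:ℤ) ∣ s.1 i + s.2 j then s
  else (Function.update s.1 i (s.1 i + 1), Function.update s.2 j (s.2 j - 1))

variable {p}

lemma step_fst_ne {i j n : ℕ} (h : n ≠ i) (s : St) : (step p i j s).1 n = s.1 n := by
  unfold step; split_ifs <;> simp [Function.update_apply, h]

lemma step_snd_ne {i j n : ℕ} (h : n ≠ j) (s : St) : (step p i j s).2 n = s.2 n := by
  unfold step; split_ifs <;> simp [Function.update_apply, h]

lemma step_of_dvd {i j : ℕ} {s : St} (h : (p:ℤ) ∣ s.1 i + s.2 j) : step p i j s = s := by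
  unfold step; simp [h]

lemma step_fst_self {i j : ℕ} (s : St) :
    (step p i j s).1 i = if (p:ℤ) ∣ s.1 i + s.2 j then s.1 i else s.1 i - 1 := by
  unfold step; split_ifs <;> simp [Function.update_apply]

lemma step_snd_self {i j : ℕ} (s : St) :
    (step p i j s).2 j = if (p:ℤ) ∣ s.1 i + s.2 j then s.2 j else s.2 j + 1 := by
  unfold step; split_ifs <;> simp [Function.update_apply]

lemma step_fst_le {i j : ℕ} (s : St) (n : ℕ) : (step p i j s).1 n ≤ s.1 n := by
  rcases eq_or_ne n i with rfl | h
  · rw [step_fst_self]; split_ifs <;> omega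
  · rw [step_fst_ne h]

lemma step_fst_ge {i j : ℕ} (s : St) (n : ℕ) : s.1 n - 1 ≤ (step p i j s).1 n := by
  rcases eq_or_ne n i with rfl | h
  · rw [step_fst_self]; split_ifs <;> omega
  · rw [step_fst_ne h]; omega

lemma step_snd_ge {i j : ℕ} (s : St) (n : ℕ) : s.2 n ≤ (step p i j s).2 n := by
  rcases eq_or_ne n j with rfl | h
  · rw [step_snd_self]; split_ifs <;> omega
  · rw [step_snd_ne h]

lemma step_snd_le {i j : ℕ} (s : St) (n : ℕ) : (step p i j s).2 n ≤ s.2 n + 1 := by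
  rcases eq_or_ne n j with rfl | h
  · rw [step_snd_self]; split_ifs <;> omega
  · rw [step_snd_ne h]; omega

lemma dvd_of_step_snd_eq {i j : ℕ} {s : St} (h : (step p i j s).2 j = s.2 j) :
    (p:ℤ) ∣ s.1 i + s.2 j := by
  by_contra hd
  rw [step_snd_self] at h; simp [hd] at h

lemma dvd_of_step_fst_eq {i j : ℕ} {s : St} (h : (step p i j s).1 i = s.1 i) :
    (p:ℤ) ∣ s.1 i + s.2 j := by
  by_contra hd
  rw [step_fst_self] at h; simp [hd] at h

lemma istep_fst_ne {i j n : ℕ} (h : n ≠ i) (s : St) : (istep p i j s).1 n = s.1 n := by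
  unfold istep; split_ifs <;> simp [Function.update_apply, h]

lemma istep_snd_ne {i j n : ℕ} (h : n ≠ j) (s : St) : (istep p i j s).2 n = s.2 n := by
  unfold istep; split_ifs <;> simp [Function.update_apply, h]

lemma istep_of_dvd {i j : ℕ} {s : St} (h : (p:ℤ) ∣ s.1 i + s.2 j) : istep p i j s = s := by
  unfold istep; simp [h]

lemma istep_fst_self {i j : ℕ} (s : St) :
    (istep p i j s).1 i = if (p:ℤ) ∣ s.1 i + s.2 j then s.1 i else s.1 i + 1 := by
  unfold istep; split_ifs <;> simp [Function.update_apply]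

lemma istep_snd_self {i j : ℕ} (s : St) :
    (istep p i j s).2 j = if (p:ℤ) ∣ s.1 i + s.2 j then s.2 j else s.2 j - 1 := by
  unfold istep; split_ifs <;> simp [Function.update_apply]

lemma istep_fst_ge {i j : ℕ} (s : St) (n : ℕ) : s.1 n ≤ (istep p i j s).1 n := by
  rcases eq_or_ne n i with rfl | h
  · rw [istep_fst_self]; split_ifs <;> omega
  · rw [istep_fst_ne h]

lemma istep_step {i j : ℕ} (s : St) : istep p i j (step p i j s) = s := by
  by_cases h : (p:ℤ) ∣ s.1 i + s.2 j
  · rw [step_of_dvd h, istep_of_dvd h]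
  · have h1 : (step p i j s).1 i = s.1 i - 1 := by rw [step_fst_self]; simp [h]
    have h2 : (step p i j s).2 j = s.2 j + 1 := by rw [step_snd_self]; simp [h]
    have hd : ¬ (p:ℤ) ∣ (step p i j s).1 i + (step p i j s).2 j := by
      rw [h1, h2]; intro hc; apply h; convert hc using 1; ring
    unfold istep
    rw [if_neg hd]
    unfold step
    rw [if_neg h]
    simp only [Function.update_self]
    ext n
    · simp [Function.update_apply]; split_ifs with hn
      · subst hn; ring
      · rfl
    · simp [Function.update_apply]; split_ifs with hn
      · subst hn; ring
      · rfl

lemma step_istep {i j : ℕ} (s : St) : step p i j (istep p i j s) = s := by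
  by_cases h : (p:ℤ) ∣ s.1 i + s.2 j
  · rw [istep_of_dvd h, step_of_dvd h]
  · have h1 : (istep p i j s).1 i = s.1 i + 1 := by rw [istep_fst_self]; simp [h]
    have h2 : (istep p i j s).2 j = s.2 j - 1 := by rw [istep_snd_self]; simp [h]
    have hd : ¬ (p:ℤ) ∣ (istep p i j s).1 i + (istep p i j s).2 j := by
      rw [h1, h2]; intro hc; apply h; convert hc using 1; ring
    unfold step
    rw [if_neg hd]
    unfold istep
    rw [if_neg h]
    simp only [Function.update_self]
    ext n
    · simp [Function.update_apply]; split_ifs with hn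
      · subst hn; ring
      · rfl
    · simp [Function.update_apply]; split_ifs with hn
      · subst hn; ring
      · rfl

end Serg
namespace Serg
variable {p : ℕ}

lemma step_fst_apply (i j n : ℕ) (s : St) :
    (step p i j s).1 n = if n = i ∧ ¬ (p:ℤ) ∣ s.1 i + s.2 j then s.1 i - 1 else s.1 n := by
  unfold step
  split_ifs with h1 h2 <;> simp_all [Function.update_apply]

lemma step_snd_apply (i j n : ℕ) (s : St) :
    (step p i j s).2 n = if n = j ∧ ¬ (p:ℤ) ∣ s.1 i + s.2 j then s.2 j + 1 else s.2 n := by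
  unfold step
  split_ifs with h1 h2 <;> simp_all [Function.update_apply]

lemma istep_fst_apply (i j n : ℕ) (s : St) :
    (istep p i j s).1 n = if n = i ∧ ¬ (p:ℤ) ∣ s.1 i + s.2 j then s.1 i + 1 else s.1 n := by
  unfold istep
  split_ifs with h1 h2 <;> simp_all [Function.update_apply]

lemma istep_snd_apply (i j n : ℕ) (s : St) :
    (istep p i j s).2 n = if n = j ∧ ¬ (p:ℤ) ∣ s.1 i + s.2 j then s.2 j - 1 else s.2 n := by
  unfold istep
  split_ifs with h1 h2 <;> simp_all [Function.update_apply]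

lemma step_comm {i j i' j' : ℕ} (hi : i ≠ i') (hj : j ≠ j') (s : St) :
    step p i j (step p i' j' s) = step p i' j' (step p i j s) := by
  have c1 : ((p:ℤ) ∣ (step p i' j' s).1 i + (step p i' j' s).2 j) ↔ ((p:ℤ) ∣ s.1 i + s.2 j) := by
    rw [step_fst_ne hi, step_snd_ne hj]
  have c2 : ((p:ℤ) ∣ (step p i j s).1 i' + (step p i j s).2 j') ↔ ((p:ℤ) ∣ s.1 i' + s.2 j') := by
    rw [step_fst_ne (Ne.symm hi), step_snd_ne (Ne.symm hj)]
  have e1 : (step p i' j' s).1 i = s.1 i := step_fst_ne hi _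
  have e2 : (step p i' j' s).2 j = s.2 j := step_snd_ne hj _
  have e3 : (step p i j s).1 i' = s.1 i' := step_fst_ne (Ne.symm hi) _
  have e4 : (step p i j s).2 j' = s.2 j' := step_snd_ne (Ne.symm hj) _
  ext n
  · rw [step_fst_apply i j n (step p i' j' s), e1, e2, step_fst_apply i' j' n s,
      step_fst_apply i' j' n (step p i j s), e3, e4, step_fst_apply i j n s]
    split_ifs <;> simp_all
  · rw [step_snd_apply i j n (step p i' j' s), e1, e2, step_snd_apply i' j' n s,
      step_snd_apply i' j' n (step p i j s), e3, e4, step_snd_apply i j n s]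
    split_ifs <;> simp_all

lemma istep_comm {i j i' j' : ℕ} (hi : i ≠ i') (hj : j ≠ j') (s : St) :
    istep p i j (istep p i' j' s) = istep p i' j' (istep p i j s) := by
  have c1 : ((p:ℤ) ∣ (istep p i' j' s).1 i + (istep p i' j' s).2 j) ↔ ((p:ℤ) ∣ s.1 i + s.2 j) := by
    rw [istep_fst_ne hi, istep_snd_ne hj]
  have c2 : ((p:ℤ) ∣ (istep p i j s).1 i' + (istep p i j s).2 j') ↔ ((p:ℤ) ∣ s.1 i' + s.2 j') := by
    rw [istep_fst_ne (Ne.symm hi), istep_snd_ne (Ne.symm hj)]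
  have e1 : (istep p i' j' s).1 i = s.1 i := istep_fst_ne hi _
  have e2 : (istep p i' j' s).2 j = s.2 j := istep_snd_ne hj _
  have e3 : (istep p i j s).1 i' = s.1 i' := istep_fst_ne (Ne.symm hi) _
  have e4 : (istep p i j s).2 j' = s.2 j' := istep_snd_ne (Ne.symm hj) _
  ext n
  · rw [istep_fst_apply i j n (istep p i' j' s), e1, e2, istep_fst_apply i' j' n s,
      istep_fst_apply i' j' n (istep p i j s), e3, e4, istep_fst_apply i j n s]
    split_ifs <;> simp_all
  · rw [istep_snd_apply i j n (istep p i' j' s), e1, e2, istep_snd_apply i' j' n s,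
      istep_snd_apply i' j' n (istep p i j s), e3, e4, istep_snd_apply i j n s]
    split_ifs <;> simp_all


def runL (p : ℕ) (L : List (ℕ×ℕ)) (s : St) : St := L.foldl (fun s q => step p q.1 q.2 s) s
def irunL (p : ℕ) (L : List (ℕ×ℕ)) (s : St) : St := L.foldl (fun s q => istep p q.1 q.2 s) s

@[simp] lemma runL_nil (s : St) : runL p [] s = s := rfl
@[simp] lemma irunL_nil (s : St) : irunL p [] s = s := rfl
@[simp] lemma runL_cons (q : ℕ×ℕ) (L : List (ℕ×ℕ)) (s : St) :
    runL p (q :: L) s = runL p L (step p q.1 q.2 s) := rfl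
@[simp] lemma irunL_cons (q : ℕ×ℕ) (L : List (ℕ×ℕ)) (s : St) :
    irunL p (q :: L) s = irunL p L (istep p q.1 q.2 s) := rfl
@[simp] lemma runL_cons' (i j : ℕ) (L : List (ℕ×ℕ)) (s : St) :
    runL p ((i, j) :: L) s = runL p L (step p i j s) := rfl
@[simp] lemma irunL_cons' (i j : ℕ) (L : List (ℕ×ℕ)) (s : St) :
    irunL p ((i, j) :: L) s = irunL p L (istep p i j s) := rfl
lemma runL_append (L L' : List (ℕ×ℕ)) (s : St) :
    runL p (L ++ L') s = runL p L' (runL p L s) := List.foldl_append ..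
lemma irunL_append (L L' : List (ℕ×ℕ)) (s : St) :
    irunL p (L ++ L') s = irunL p L' (irunL p L s) := List.foldl_append ..

lemma irunL_runL (L : List (ℕ×ℕ)) (s : St) : irunL p L.reverse (runL p L s) = s := by
  induction L generalizing s with
  | nil => rfl
  | cons q L ih =>
    simp only [runL_cons, List.reverse_cons, irunL_append]
    rw [ih]
    simp [istep_step]

lemma runL_irunL (L : List (ℕ×ℕ)) (s : St) : runL p L (irunL p L.reverse s) = s := by
  induction L generalizing s with
  | nil => rfl
  | cons q L ih =>
    simp only [runL_cons, List.reverse_cons, irunL_append]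
    simp only [irunL_cons, irunL_nil, step_istep]
    exact ih _

lemma runL_fst_untouched {L : List (ℕ×ℕ)} {n : ℕ} (h : ∀ q ∈ L, q.1 ≠ n) (s : St) :
    (runL p L s).1 n = s.1 n := by
  induction L generalizing s with
  | nil => rfl
  | cons q L ih =>
    rw [runL_cons, ih (fun q hq => h q (List.mem_cons_of_mem _ hq)),
      step_fst_ne (Ne.symm (h q List.mem_cons_self))]

lemma runL_snd_untouched {L : List (ℕ×ℕ)} {n : ℕ} (h : ∀ q ∈ L, q.2 ≠ n) (s : St) :
    (runL p L s).2 n = s.2 n := by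
  induction L generalizing s with
  | nil => rfl
  | cons q L ih =>
    rw [runL_cons, ih (fun q hq => h q (List.mem_cons_of_mem _ hq)),
      step_snd_ne (Ne.symm (h q List.mem_cons_self))]

lemma irunL_fst_untouched {L : List (ℕ×ℕ)} {n : ℕ} (h : ∀ q ∈ L, q.1 ≠ n) (s : St) :
    (irunL p L s).1 n = s.1 n := by
  induction L generalizing s with
  | nil => rfl
  | cons q L ih =>
    rw [irunL_cons, ih (fun q hq => h q (List.mem_cons_of_mem _ hq)),
      istep_fst_ne (Ne.symm (h q List.mem_cons_self))]

lemma irunL_snd_untouched {L : List (ℕ×ℕ)} {n : ℕ} (h : ∀ q ∈ L, q.2 ≠ n) (s : St) :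
    (irunL p L s).2 n = s.2 n := by
  induction L generalizing s with
  | nil => rfl
  | cons q L ih =>
    rw [irunL_cons, ih (fun q hq => h q (List.mem_cons_of_mem _ hq)),
      istep_snd_ne (Ne.symm (h q List.mem_cons_self))]

lemma runL_fst_le (L : List (ℕ×ℕ)) (s : St) (n : ℕ) : (runL p L s).1 n ≤ s.1 n := by
  induction L generalizing s with
  | nil => exact le_refl _
  | cons q L ih => exact le_trans (ih _) (step_fst_le _ _)

lemma runL_snd_ge (L : List (ℕ×ℕ)) (s : St) (n : ℕ) : s.2 n ≤ (runL p L s).2 n := by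
  induction L generalizing s with
  | nil => exact le_refl _
  | cons q L ih => exact le_trans (step_snd_ge _ _) (ih _)

lemma runL_step_comm {L : List (ℕ×ℕ)} {i j : ℕ} (h : ∀ q ∈ L, q.1 ≠ i ∧ q.2 ≠ j) (s : St) :
    runL p L (step p i j s) = step p i j (runL p L s) := by
  induction L generalizing s with
  | nil => rfl
  | cons q L ih =>
    have hq := h q List.mem_cons_self
    rw [runL_cons, step_comm hq.1 hq.2, ih fun q hq => h q (List.mem_cons_of_mem _ hq)]
    rfl

/-- The shift (tail) of a state. -/
def tl (s : St) : St := (fun n => s.1 (n+1), fun n => s.2 (n+1))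

def sh (q : ℕ × ℕ) : ℕ × ℕ := (q.1 + 1, q.2 + 1)

lemma tl_step (i j : ℕ) (s : St) : tl (step p (i+1) (j+1) s) = step p i j (tl s) := by
  ext n
  · show (step p (i+1) (j+1) s).1 (n+1) = _
    rw [step_fst_apply, step_fst_apply]
    simp only [tl, add_left_inj]
    exact if_congr Iff.rfl rfl rfl
  · show (step p (i+1) (j+1) s).2 (n+1) = _
    rw [step_snd_apply, step_snd_apply]
    simp only [tl, add_left_inj]
    exact if_congr Iff.rfl rfl rfl

lemma tl_istep (i j : ℕ) (s : St) : tl (istep p (i+1) (j+1) s) = istep p i j (tl s) := by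
  ext n
  · show (istep p (i+1) (j+1) s).1 (n+1) = _
    rw [istep_fst_apply, istep_fst_apply]
    simp only [tl, add_left_inj]
    exact if_congr Iff.rfl rfl rfl
  · show (istep p (i+1) (j+1) s).2 (n+1) = _
    rw [istep_snd_apply, istep_snd_apply]
    simp only [tl, add_left_inj]
    exact if_congr Iff.rfl rfl rfl

lemma tl_runL (L : List (ℕ×ℕ)) (s : St) : tl (runL p (L.map sh) s) = runL p L (tl s) := by
  induction L generalizing s with
  | nil => rfl
  | cons q L ih =>
    rw [List.map_cons, runL_cons, runL_cons, ih, ← tl_step]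
    rfl

lemma tl_irunL (L : List (ℕ×ℕ)) (s : St) : tl (irunL p (L.map sh) s) = irunL p L (tl s) := by
  induction L generalizing s with
  | nil => rfl
  | cons q L ih =>
    rw [List.map_cons, irunL_cons, irunL_cons, ih, ← tl_istep]
    rfl


/-- Pairs `(b+k-1, j), ..., (b, j)`: one pass on column `j`, rows descending from `b+k-1` to `b`. -/
def colPairs (b j : ℕ) : ℕ → List (ℕ × ℕ)
  | 0 => []
  | (k+1) => (b+k, j) :: colPairs b j k

lemma mem_colPairs {b j k : ℕ} {q : ℕ×ℕ} (h : q ∈ colPairs b j k) :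
    q.2 = j ∧ b ≤ q.1 ∧ q.1 < b + k := by
  induction k with
  | zero => simp [colPairs] at h
  | succ k ih =>
    rcases List.mem_cons.1 h with rfl | h
    · exact ⟨rfl, by omega, by omega⟩
    · obtain ⟨h1, h2, h3⟩ := ih h
      exact ⟨h1, h2, by omega⟩

lemma colPairs_concat (b j k : ℕ) :
    colPairs b j (k+1) = colPairs (b+1) j k ++ [(b, j)] := by
  induction k with
  | zero => simp [colPairs]
  | succ k ih =>
    show (b+(k+1), j) :: colPairs b j (k+1) = (b+1+k, j) :: colPairs (b+1) j k ++ [(b, j)]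
    rw [ih]
    simp [show b+(k+1) = b+1+k by omega]

lemma map_sh_colPairs (b j k : ℕ) :
    (colPairs b j k).map sh = colPairs (b+1) (j+1) k := by
  induction k with
  | zero => rfl
  | succ k ih =>
    show sh (b+k, j) :: (colPairs b j k).map sh = (b+1+k, j+1) :: colPairs (b+1) (j+1) k
    rw [ih]; simp [sh]; omega

/-- The full order: columns `0,...,M-1`; column `j` processes rows `M-1` down to `j`. -/
def ordL : ℕ → List (ℕ × ℕ)
  | 0 => []
  | (M+1) => colPairs 0 0 (M+1) ++ (ordL M).map sh

lemma mem_ordL {M : ℕ} {q : ℕ×ℕ} (h : q ∈ ordL M) : q.1 < M ∧ q.2 < M := by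
  induction M generalizing q with
  | zero => simp [ordL] at h
  | succ M ih =>
    rcases List.mem_append.1 h with h | h
    · have := mem_colPairs h; omega
    · obtain ⟨q', hq', rfl⟩ := List.mem_map.1 h
      have := ih hq'
      simp [sh]; omega

/-- Inverse pass: rows ascending from `b` to `b+k-1` on column `j`, with inverse steps. -/
def ipass (p b j : ℕ) : ℕ → St → St
  | 0, s => s
  | (k+1), s => istep p (b+k) j (ipass p b j k s)

lemma irunL_colPairs (b j k : ℕ) (s : St) :
    irunL p (colPairs b j k).reverse s = ipass p b j k s := by
  induction k generalizing s with
  | zero => rfl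
  | succ k ih =>
    show irunL p ((b+k, j) :: colPairs b j k).reverse s = _
    rw [List.reverse_cons, irunL_append, ih]
    rfl

lemma ipass_bot (b j k : ℕ) (s : St) :
    ipass p b j (k+1) s = ipass p (b+1) j k (istep p b j s) := by
  induction k generalizing s with
  | zero => show istep p (b+0) j s = istep p b j s; rw [Nat.add_zero]
  | succ k ih =>
    show istep p (b+(k+1)) j (ipass p b j (k+1) s) = istep p (b+1+k) j (ipass p (b+1) j k (istep p b j s))
    rw [ih, show b+(k+1) = b+1+k by omega]

lemma ipass_fst_untouched {b j k n : ℕ} (h : n < b ∨ b + k ≤ n) (s : St) :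
    (ipass p b j k s).1 n = s.1 n := by
  induction k with
  | zero => rfl
  | succ k ih =>
    show (istep p (b+k) j (ipass p b j k s)).1 n = s.1 n
    rw [istep_fst_ne (by omega), ih (by omega)]

lemma ipass_snd_untouched {b j k n : ℕ} (h : n ≠ j) (s : St) :
    (ipass p b j k s).2 n = s.2 n := by
  induction k with
  | zero => rfl
  | succ k ih =>
    show (istep p (b+k) j (ipass p b j k s)).2 n = s.2 n
    rw [istep_snd_ne h, ih]

lemma ipass_fst_ge (b j k : ℕ) (s : St) (n : ℕ) : s.1 n ≤ (ipass p b j k s).1 n := by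
  induction k with
  | zero => exact le_refl _
  | succ k ih => exact le_trans ih (istep_fst_ge _ _)

lemma ipass_istep_comm {b j k i j' : ℕ} (hi : i < b ∨ b + k ≤ i) (hj : j' ≠ j) (s : St) :
    ipass p b j k (istep p i j' s) = istep p i j' (ipass p b j k s) := by
  induction k with
  | zero => rfl
  | succ k ih =>
    show istep p (b+k) j (ipass p b j k (istep p i j' s)) = _
    rw [ih (by omega), istep_comm (by omega) (Ne.symm hj)]
    rfl

lemma runL_colPairs_fst_ge (b j k : ℕ) (s : St) (n : ℕ) :
    s.1 n - 1 ≤ (runL p (colPairs b j k) s).1 n := by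
  induction k generalizing s with
  | zero => simp [colPairs]
  | succ k ih =>
    show s.1 n - 1 ≤ (runL p (colPairs b j k) (step p (b+k) j s)).1 n
    rcases eq_or_ne n (b+k) with rfl | hn
    · rw [runL_fst_untouched (fun q hq => by have := mem_colPairs hq; omega)]
      exact step_fst_ge _ _
    · calc s.1 n - 1 = (step p (b+k) j s).1 n - 1 := by rw [step_fst_ne hn]
        _ ≤ _ := ih _


lemma colPairs_zero_succ (j k : ℕ) : colPairs 0 j (k+1) = (k, j) :: colPairs 0 j k := by
  show (0+k, j) :: _ = _
  rw [Nat.zero_add]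

/-- Forward pass preserves antitonicity of `λ` on the processed range. -/
lemma antiF {j : ℕ} : ∀ (k : ℕ) (s : St), (∀ i, i+1 < k → s.1 (i+1) ≤ s.1 i) →
    ∀ i, i+1 < k → (runL p (colPairs 0 j k) s).1 (i+1) ≤ (runL p (colPairs 0 j k) s).1 i := by
  intro k
  induction k with
  | zero => intro s _ i hi; omega
  | succ k ih =>
    intro s hs i hi
    rw [colPairs_zero_succ, runL_cons']
    have hts : ∀ n, n ≠ k → (step p k j s).1 n = s.1 n := fun n hn => step_fst_ne hn s
    rcases Nat.lt_or_ge (i+1) k with h | h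
    · exact ih (step p k j s)
        (fun i h => by rw [hts _ (by omega), hts _ (by omega)]; exact hs i (by omega)) i h
    · have hik : i + 1 = k := by omega
      subst hik
      have hrk : (runL p (colPairs 0 j (i+1)) (step p (i+1) j s)).1 (i+1)
          = (step p (i+1) j s).1 (i+1) :=
        runL_fst_untouched (fun q hq => by have := mem_colPairs hq; omega) _
      by_cases hd : (p:ℤ) ∣ s.1 (i+1) + s.2 j
      · rw [hrk, step_of_dvd hd]
        rcases eq_or_lt_of_le (hs i (by omega)) with heq | hlt
        · rw [colPairs_zero_succ, runL_cons']
          have hd2 : (p:ℤ) ∣ s.1 i + s.2 j := by rw [heq] at hd; exact hd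
          rw [step_of_dvd hd2,
            runL_fst_untouched (fun q hq => by have := mem_colPairs hq; omega) s]
          exact le_of_eq heq
        · have := runL_colPairs_fst_ge (p := p) 0 j (i+1) s i
          omega
      · have ht1 : (step p (i+1) j s).1 (i+1) = s.1 (i+1) - 1 := by
          rw [step_fst_self]; simp [hd]
        have hlow := runL_colPairs_fst_ge (p := p) 0 j (i+1) (step p (i+1) j s) i
        have h2 : (step p (i+1) j s).1 i = s.1 i := hts i (by omega)
        have hsi := hs i (by omega)
        rw [hrk, ht1]
        omega

lemma ipass_zero_succ (j k : ℕ) (s : St) :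
    ipass p 0 j (k+1) s = istep p k j (ipass p 0 j k s) := by
  show istep p (0+k) j _ = _
  rw [Nat.zero_add]

/-- Inverse pass preserves antitonicity of `λ` on the processed range. -/
lemma antiI {j : ℕ} : ∀ (k : ℕ) (s : St), (∀ i, i+1 < k → s.1 (i+1) ≤ s.1 i) →
    ∀ i, i+1 < k → (ipass p 0 j k s).1 (i+1) ≤ (ipass p 0 j k s).1 i := by
  intro k
  induction k with
  | zero => intro s _ i hi; omega
  | succ k ih =>
    intro s hs i hi
    rw [ipass_zero_succ]
    set r := ipass p 0 j k s with hr
    rcases Nat.lt_or_ge (i+1) k with h | h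
    · rw [istep_fst_ne (by omega : i+1 ≠ k), istep_fst_ne (by omega : i ≠ k)]
      exact ih s (fun i h => hs i (by omega)) i h
    · have hik : i + 1 = k := by omega
      subst hik
      rw [istep_fst_ne (by omega : i ≠ i+1)]
      have hrk : r.1 (i+1) = s.1 (i+1) := ipass_fst_untouched (by omega) s
      have hri : s.1 i ≤ r.1 i := ipass_fst_ge _ _ _ _ _
      by_cases hd : (p:ℤ) ∣ r.1 (i+1) + r.2 j
      · rw [istep_of_dvd hd, hrk]
        have := hs i (by omega)
        omega
      · have hb : (istep p (i+1) j r).1 (i+1) = r.1 (i+1) + 1 := by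
          rw [istep_fst_self]; simp [hd]
        rw [hb, hrk]
        rcases eq_or_lt_of_le (hs i (by omega)) with heq | hlt
        swap
        · omega
        rcases eq_or_lt_of_le hri with heq2 | hlt2
        swap
        · omega
        exfalso
        apply hd
        have hw1 : (ipass p 0 j i s).1 i = s.1 i := ipass_fst_untouched (by omega) s
        have hw2 : (ipass p 0 j i s).1 (i+1) = s.1 (i+1) := ipass_fst_untouched (by omega) s
        have hrdef : r = istep p i j (ipass p 0 j i s) := by
          rw [hr]; exact ipass_zero_succ _ _ _
        by_cases hd2 : (p:ℤ) ∣ (ipass p 0 j i s).1 i + (ipass p 0 j i s).2 j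
        · have hreq : r = ipass p 0 j i s := by rw [hrdef, istep_of_dvd hd2]
          rw [hreq, hw2, heq, ← hw1]
          exact hd2
        · exfalso
          have hcon : r.1 i = (ipass p 0 j i s).1 i + 1 := by
            rw [hrdef, istep_fst_self]; simp [hd2]
          rw [hw1] at hcon
          omega


lemma istep_snd_ge_sub {i j : ℕ} (s : St) (n : ℕ) : s.2 n - 1 ≤ (istep p i j s).2 n := by
  rcases eq_or_ne n j with rfl | h
  · rw [istep_snd_self]; split_ifs <;> omega
  · rw [istep_snd_ne h]; omega

lemma colPairs_succ (b j k : ℕ) : colPairs b j (k+1) = (b+k, j) :: colPairs b j k := rfl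

/-- Coupling of two consecutive forward passes (columns 0 then 1, rows `n..1`). -/
lemma coupF : ∀ (n : ℕ) (s : St), s.2 1 ≤ s.2 0 →
    (runL p (colPairs 1 1 n) (runL p (colPairs 1 0 n) s)).2 1 ≤ (runL p (colPairs 1 0 n) s).2 0 := by
  intro n
  induction n with
  | zero => intro s h; exact h
  | succ n ih =>
    intro s h
    rw [colPairs_succ 1 0 n, colPairs_succ 1 1 n, runL_cons', runL_cons']
    have hcomm : runL p (colPairs 1 0 n) (step p (1+n) 1 (step p (1+n) 0 s))
        = step p (1+n) 1 (runL p (colPairs 1 0 n) (step p (1+n) 0 s)) :=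
      runL_step_comm (fun q hq => by have := mem_colPairs hq; omega) _
    rw [← hcomm]
    set s2 := step p (1+n) 1 (step p (1+n) 0 s) with hs2
    have key : s2.2 1 ≤ s2.2 0 := by
      by_cases hd1 : (p:ℤ) ∣ s.1 (1+n) + s.2 0
      · have hx : step p (1+n) 0 s = s := step_of_dvd hd1
        rw [hs2, hx]
        by_cases hd2 : (p:ℤ) ∣ s.1 (1+n) + s.2 1
        · rw [step_of_dvd hd2]; exact h
        · have e1 : (step p (1+n) 1 s).2 1 = s.2 1 + 1 := by rw [step_snd_self]; simp [hd2]
          have e2 : (step p (1+n) 1 s).2 0 = s.2 0 := step_snd_ne (by omega) s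
          rw [e1, e2]
          rcases eq_or_lt_of_le h with heq | hlt
          · exfalso; rw [heq] at hd2; exact hd2 hd1
          · omega
      · set x := step p (1+n) 0 s with hx
        have e1 : x.2 0 = s.2 0 + 1 := by rw [hx, step_snd_self]; simp [hd1]
        have e2 : x.2 1 = s.2 1 := step_snd_ne (by omega) s
        have e3 : s2.2 0 = x.2 0 := step_snd_ne (by omega) x
        have e4 : s2.2 1 ≤ x.2 1 + 1 := step_snd_le x 1
        omega
    have hmain := ih s2 key
    have e5 : (runL p (colPairs 1 0 n) s2).2 0
        = (runL p (colPairs 1 0 n) (step p (1+n) 0 s)).2 0 := by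
      rw [hcomm, step_snd_ne (by omega)]
    rw [e5] at hmain
    exact hmain

lemma ipass_succ (b j k : ℕ) (s : St) :
    ipass p b j (k+1) s = istep p (b+k) j (ipass p b j k s) := rfl

/-- Coupling of two consecutive inverse passes (column 1 then column 0, rows `1..n`). -/
lemma coupI : ∀ (n : ℕ) (s : St), s.2 1 ≤ s.2 0 →
    (ipass p 1 1 n s).2 1 ≤ (ipass p 1 0 n (ipass p 1 1 n s)).2 0 := by
  intro n
  induction n with
  | zero => intro s h; exact h
  | succ n ih =>
    intro s h
    rw [ipass_succ 1 1 n, ipass_succ 1 0 n]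
    set X' := ipass p 1 1 n s with hX'
    have hcomm : ipass p 1 0 n (istep p (1+n) 1 X')
        = istep p (1+n) 1 (ipass p 1 0 n X') := ipass_istep_comm (by omega) (by omega) X'
    rw [hcomm]
    set Y' := ipass p 1 0 n X' with hY'
    have hIH : X'.2 1 ≤ Y'.2 0 := ih s h
    have ha : Y'.1 (1+n) = X'.1 (1+n) := ipass_fst_untouched (by omega) X'
    have hu : Y'.2 1 = X'.2 1 := ipass_snd_untouched (by omega) X'
    by_cases hd : (p:ℤ) ∣ X'.1 (1+n) + X'.2 1
    · have e1 : (istep p (1+n) 1 X').2 1 = X'.2 1 := by rw [istep_of_dvd hd]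
      have e2 : istep p (1+n) 1 Y' = Y' := by
        apply istep_of_dvd
        rw [ha, hu]
        exact hd
      rw [e1, e2]
      by_cases hd0 : (p:ℤ) ∣ Y'.1 (1+n) + Y'.2 0
      · rw [istep_of_dvd hd0]; exact hIH
      · have e3 : (istep p (1+n) 0 Y').2 0 = Y'.2 0 - 1 := by rw [istep_snd_self]; simp [hd0]
        rw [e3]
        rcases eq_or_lt_of_le hIH with heq | hlt
        · exfalso; apply hd0; rw [ha, ← heq]; exact hd
        · omega
    · have e1 : (istep p (1+n) 1 X').2 1 = X'.2 1 - 1 := by rw [istep_snd_self]; simp [hd]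
      have e2 : (istep p (1+n) 1 Y').2 0 = Y'.2 0 := istep_snd_ne (by omega) Y'
      have e3 := istep_snd_ge_sub (p := p) (i := 1+n) (j := 0) (istep p (1+n) 1 Y') 0
      rw [e1]
      omega


def AsetN (M N : ℕ) (s : St) : Prop :=
  (∀ i, i+1 < M → s.1 (i+1) ≤ s.1 i) ∧ (∀ j, j+1 < N → s.2 (j+1) ≤ s.2 j)

def MsetN (p M N : ℕ) (s : St) : Prop :=
  AsetN M N s ∧
  (∀ i, i < M → s.2 i = s.2 (i+1) → (p:ℤ) ∣ s.2 i + s.1 i) ∧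
  (∀ i, i+1 < M → s.1 i = s.1 (i+1) → (p:ℤ) ∣ s.2 (i+1) + s.1 (i+1))

lemma mem_map_sh {L : List (ℕ×ℕ)} {q : ℕ×ℕ} (h : q ∈ L.map sh) : q.1 ≠ 0 ∧ q.2 ≠ 0 := by
  obtain ⟨q', _, rfl⟩ := List.mem_map.1 h
  simp [sh]

lemma ordL_succ (M : ℕ) : ordL (M+1) = colPairs 0 0 (M+1) ++ (ordL M).map sh := rfl

/-- Forward main theorem: the algorithm maps dominant states into `𝕄`. -/
theorem thmF : ∀ (M : ℕ), ∀ (N : ℕ) (s : St), M + 1 ≤ N → AsetN M N s →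
    MsetN p M N (runL p (ordL M) s) := by
  intro M
  induction M with
  | zero =>
    intro N s hN hA
    exact ⟨hA, fun i hi => by omega, fun i hi => by omega⟩
  | succ M ih =>
    intro N s hN hA
    obtain ⟨hAl, hAt⟩ := hA
    -- decompose the run
    have hdec : runL p (ordL (M+1)) s
        = runL p ((ordL M).map sh) (runL p (colPairs 0 0 (M+1)) s) := by
      rw [ordL_succ, runL_append]
    set sA := runL p (colPairs 1 0 M) s with hsA
    have hs1 : runL p (colPairs 0 0 (M+1)) s = step p 0 0 sA := by
      rw [show colPairs 0 0 (M+1) = colPairs 1 0 M ++ [(0,0)] from colPairs_concat 0 0 M,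
        runL_append, hsA]
      rfl
    set s1 := step p 0 0 sA with hs1d
    rw [hs1] at hdec
    set s' := runL p (ordL (M+1)) s with hs'
    -- head components are untouched by the shifted part
    have h10 : s'.1 0 = s1.1 0 := by
      rw [hdec]; exact runL_fst_untouched (fun q hq => (mem_map_sh hq).1) s1
    have h20 : s'.2 0 = s1.2 0 := by
      rw [hdec]; exact runL_snd_untouched (fun q hq => (mem_map_sh hq).2) s1
    have h11 : tl s' = runL p (ordL M) (tl s1) := by rw [hdec]; exact tl_runL _ _
    -- antitone of λ after pass 0
    have h12 : ∀ i, i+1 < M+1 → s1.1 (i+1) ≤ s1.1 i := by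
      have := antiF (p := p) (j := 0) (M+1) s hAl
      intro i hi
      have h := this i hi
      rw [hs1] at h
      exact h
    -- θ entries other than 0 are untouched by pass 0
    have h13 : ∀ n, n ≠ 0 → s1.2 n = s.2 n := by
      intro n hn
      rw [hs1d, step_snd_ne hn, hsA,
        runL_snd_untouched (fun q hq => by have := mem_colPairs hq; omega)]
    -- the shifted state is dominant
    have h14 : AsetN M (N-1) (tl s1) := by
      constructor
      · intro i hi; exact h12 (i+1) (by omega)
      · intro j hj
        show s1.2 (j+1+1) ≤ s1.2 (j+1)
        rw [h13 _ (by omega), h13 _ (by omega)]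
        exact hAt (j+1) (by omega)
    have hIH := ih (N-1) (tl s1) (by omega) h14
    rw [← h11] at hIH
    obtain ⟨⟨hIl, hIt⟩, hIc1, hIc2⟩ := hIH
    -- key coupling bound : s'.2 1 ≤ sA.2 0
    have hkey : s'.2 1 ≤ sA.2 0 := by
      cases M with
      | zero =>
        have : s' = s1 := by rw [hdec]; rfl
        rw [this, h13 1 (by omega)]
        have : sA = s := by rw [hsA]; rfl
        rw [this]
        exact hAt 0 (by omega)
      | succ M' =>
        -- s'.2 1 is determined after the column-1 pass
        have hms : (ordL (M'+1)).map sh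
            = colPairs 1 1 (M'+1) ++ ((ordL M').map sh).map sh := by
          rw [ordL_succ, List.map_append, map_sh_colPairs]
        have e1 : s'.2 1 = (runL p (colPairs 1 1 (M'+1)) s1).2 1 := by
          rw [hdec, hms, runL_append]
          exact runL_snd_untouched (fun q hq => by
            obtain ⟨q', hq', rfl⟩ := List.mem_map.1 hq
            obtain ⟨q'', hq'', rfl⟩ := List.mem_map.1 hq'
            simp [sh]) _
        have e2 : runL p (colPairs 1 1 (M'+1)) s1 = step p 0 0 (runL p (colPairs 1 1 (M'+1)) sA) := by
          rw [hs1d]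
          exact runL_step_comm (fun q hq => by have := mem_colPairs hq; omega) sA
        have e3 := coupF (p := p) (M'+1) s (hAt 0 (by omega))
        rw [← hsA] at e3
        rw [e1, e2, step_snd_ne (by omega)]
        exact e3
    have hs20 : sA.2 0 ≤ s1.2 0 := by rw [hs1d]; exact step_snd_ge sA 0
    refine ⟨⟨?_, ?_⟩, ?_, ?_⟩
    · -- λ antitone
      intro i hi
      cases i with
      | zero =>
        simp only [Nat.zero_add]
        have e1 : s'.1 1 = (tl s').1 0 := rfl
        have e2 : (tl s').1 0 ≤ (tl s1).1 0 := by rw [h11]; exact runL_fst_le _ _ _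
        have e3 : (tl s1).1 0 = s1.1 1 := rfl
        have e4 : s1.1 1 ≤ s1.1 0 := h12 0 (by omega)
        rw [h10]
        omega
      | succ i => exact hIl i (by omega)
    · -- θ antitone
      intro j hj
      cases j with
      | zero =>
        simp only [Nat.zero_add]
        rw [h20]
        omega
      | succ j => exact hIt j (by omega)
    · -- θ-condition
      intro i hi heq
      cases i with
      | zero =>
        simp only [Nat.zero_add] at heq ⊢
        have e0 : s'.2 0 = s1.2 0 := h20
        have e1 : s1.2 0 = sA.2 0 := by omega
        have hdd : (p:ℤ) ∣ sA.1 0 + sA.2 0 := by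
          apply dvd_of_step_snd_eq
          rw [← hs1d, e1]
        have e2 : s'.1 0 = sA.1 0 := by
          rw [h10, hs1d, step_of_dvd hdd]
        rw [e0, e1, e2, Int.add_comm]
        exact hdd
      | succ i => exact hIc1 i (by omega) heq
    · -- λ-condition
      intro i hi heq
      cases i with
      | zero =>
        simp only [Nat.zero_add] at heq ⊢
        -- M ≥ 1 here since 0+1 < M+1
        have hM1 : 1 ≤ M := by omega
        obtain ⟨M', rfl⟩ : ∃ M', M = M'+1 := ⟨M-1, by omega⟩
        have hms : (ordL (M'+1)).map sh
            = colPairs 1 1 (M'+1) ++ ((ordL M').map sh).map sh := by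
          rw [ordL_succ, List.map_append, map_sh_colPairs]
        set w := runL p (colPairs 2 1 M') s1 with hw
        have hsplit : runL p (colPairs 1 1 (M'+1)) s1 = step p 1 1 w := by
          rw [show colPairs 1 1 (M'+1) = colPairs 2 1 M' ++ [(1,1)] from colPairs_concat 1 1 M',
        runL_append, hw]
          rfl
        have huntouched : ∀ q ∈ ((ordL M').map sh).map sh, q.1 ≠ 1 ∧ q.2 ≠ 1 := by
          intro q hq
          obtain ⟨q', hq', rfl⟩ := List.mem_map.1 hq
          obtain ⟨q'', hq'', rfl⟩ := List.mem_map.1 hq'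
          simp [sh]
        have e1 : s'.1 1 = (step p 1 1 w).1 1 := by
          rw [hdec, hms, runL_append, hsplit]
          exact runL_fst_untouched (fun q hq => (huntouched q hq).1) _
        have e2 : s'.2 1 = (step p 1 1 w).2 1 := by
          rw [hdec, hms, runL_append, hsplit]
          exact runL_snd_untouched (fun q hq => (huntouched q hq).2) _
        have e3 : w.1 1 = s1.1 1 := by
          rw [hw]; exact runL_fst_untouched (fun q hq => by have := mem_colPairs hq; omega) _
        by_cases hdd : (p:ℤ) ∣ w.1 1 + w.2 1
        · rw [e2, e1, step_of_dvd hdd, Int.add_comm]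
          exact hdd
        · exfalso
          have e4 : (step p 1 1 w).1 1 = w.1 1 - 1 := by rw [step_fst_self]; simp [hdd]
          have e5 : s1.1 1 ≤ s1.1 0 := h12 0 (by omega)
          have e6 : s'.1 0 = s1.1 0 := h10
          rw [e1, e4, e3] at heq
          omega
      | succ i =>
        exact hIc2 i (by omega) heq

lemma irunL_ordL_succ (M : ℕ) (s : St) :
    irunL p (ordL (M+1)).reverse s
      = ipass p 0 0 (M+1) (irunL p ((ordL M).map sh).reverse s) := by
  rw [ordL_succ, List.reverse_append, irunL_append, irunL_colPairs]

lemma tl_irunL_sh (L : List (ℕ×ℕ)) (s : St) :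
    tl (irunL p (L.map sh).reverse s) = irunL p L.reverse (tl s) := by
  rw [← List.map_reverse, tl_irunL]

lemma TRow0 (M : ℕ) (s : St) :
    (irunL p (ordL (M+1)).reverse s).1 0
      = if (p:ℤ) ∣ s.1 0 + s.2 0 then s.1 0 else s.1 0 + 1 := by
  rw [irunL_ordL_succ]
  set sT := irunL p ((ordL M).map sh).reverse s with hsT
  have h1 : sT.1 0 = s.1 0 := by
    rw [hsT]; exact irunL_fst_untouched (fun q hq => (mem_map_sh (List.mem_reverse.1 hq)).1) s
  have h2 : sT.2 0 = s.2 0 := by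
    rw [hsT]; exact irunL_snd_untouched (fun q hq => (mem_map_sh (List.mem_reverse.1 hq)).2) s
  have hb : ipass p 0 0 (M+1) sT = ipass p 1 0 M (istep p 0 0 sT) := ipass_bot 0 0 M sT
  rw [hb, ipass_fst_untouched (by omega), istep_fst_self, h1, h2]

/-- Backward main theorem: the inverse algorithm maps `𝕄` into dominant states. -/
theorem thmB : ∀ (M : ℕ), ∀ (N : ℕ) (s : St), M + 1 ≤ N → MsetN p M N s →
    AsetN M N (irunL p (ordL M).reverse s) := by
  intro M
  induction M with
  | zero =>
    intro N s hN hM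
    exact hM.1
  | succ M ih =>
    intro N s hN hM
    obtain ⟨⟨hAl, hAt⟩, hc1, hc2⟩ := hM
    rw [irunL_ordL_succ]
    set sT := irunL p ((ordL M).map sh).reverse s with hsT
    have h1 : sT.1 0 = s.1 0 := by
      rw [hsT]; exact irunL_fst_untouched (fun q hq => (mem_map_sh (List.mem_reverse.1 hq)).1) s
    have h2 : sT.2 0 = s.2 0 := by
      rw [hsT]; exact irunL_snd_untouched (fun q hq => (mem_map_sh (List.mem_reverse.1 hq)).2) s
    have h3 : tl sT = irunL p (ordL M).reverse (tl s) := by rw [hsT]; exact tl_irunL_sh _ _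
    have hMtl : MsetN p M (N-1) (tl s) := by
      refine ⟨⟨fun i hi => hAl (i+1) (by omega), fun j hj => hAt (j+1) (by omega)⟩,
        fun i hi heq => hc1 (i+1) (by omega) heq, fun i hi heq => hc2 (i+1) (by omega) heq⟩
    have hIH : AsetN M (N-1) (tl sT) := by rw [h3]; exact ih (N-1) (tl s) (by omega) hMtl
    obtain ⟨hIl, hIt⟩ := hIH
    have hin : ∀ i, i+1 < M+1 → sT.1 (i+1) ≤ sT.1 i := by
      intro i hi
      cases i with
      | zero =>
        obtain ⟨M', rfl⟩ : ∃ M', M = M'+1 := ⟨M-1, by omega⟩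
        have hrow : sT.1 1 = if (p:ℤ) ∣ s.1 1 + s.2 1 then s.1 1 else s.1 1 + 1 := by
          have e0 : sT.1 1 = (tl sT).1 0 := rfl
          rw [e0, h3]
          have e1 := TRow0 (p := p) M' (tl s)
          rw [e1]
          rfl
        simp only [Nat.zero_add]
        rw [hrow, h1]
        have hle := hAl 0 (by omega)
        simp only [Nat.zero_add] at hle
        rcases eq_or_lt_of_le hle with heq | hlt
        · have hdvd : (p:ℤ) ∣ s.2 1 + s.1 1 := hc2 0 (by omega) heq.symm
          rw [if_pos (by rw [Int.add_comm]; exact hdvd)]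
          omega
        · split_ifs <;> omega
      | succ i =>
        exact hIl i (by omega)
    constructor
    · exact fun i hi => antiI (M+1) sT hin i hi
    · intro j hj
      cases j with
      | succ j =>
        have e1 : (ipass p 0 0 (M+1) sT).2 (j+1+1) = sT.2 (j+1+1) :=
          ipass_snd_untouched (by omega) sT
        have e2 : (ipass p 0 0 (M+1) sT).2 (j+1) = sT.2 (j+1) :=
          ipass_snd_untouched (by omega) sT
        rw [e1, e2]
        exact hIt j (by omega)
      | zero =>
        simp only [Nat.zero_add]
        have hd0 : (istep p 0 0 sT).2 0
            = (if (p:ℤ) ∣ s.1 0 + s.2 0 then s.2 0 else s.2 0 - 1) := by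
          rw [istep_snd_self, h1, h2]
        have hd0' : s.2 1 ≤ (istep p 0 0 sT).2 0 := by
          rw [hd0]
          rcases eq_or_lt_of_le (show s.2 1 ≤ s.2 0 from hAt 0 (by omega)) with heq | hlt
          · rw [if_pos (by rw [Int.add_comm]; exact hc1 0 (by omega) heq.symm)]
            omega
          · split_ifs <;> omega
        cases M with
        | zero =>
          have hr : ipass p 0 0 1 sT = istep p 0 0 sT := by
            rw [ipass_bot]; rfl
          rw [hr, istep_snd_ne (by omega : (1:ℕ) ≠ 0)]
          have hsT0 : sT = s := by rw [hsT]; rfl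
          rw [hsT0]
          rw [hsT0] at hd0'
          exact hd0'
        | succ M' =>
          set sD := irunL p (((ordL M').map sh).map sh).reverse s with hsD
          have hsTd : sT = ipass p 1 1 (M'+1) sD := by
            rw [hsT, ordL_succ, List.map_append, map_sh_colPairs, List.reverse_append,
              irunL_append, irunL_colPairs, hsD]
          have hsD2 : sD.2 1 = s.2 1 := by
            rw [hsD]
            exact irunL_snd_untouched (fun q hq => by
              have hq2 := List.mem_reverse.1 hq
              obtain ⟨q2, hq3, rfl⟩ := List.mem_map.1 hq2
              obtain ⟨q3, hq4, rfl⟩ := List.mem_map.1 hq3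
              simp [sh]) s
          have hbot : ipass p 0 0 (M'+1+1) sT = ipass p 1 0 (M'+1) (istep p 0 0 sT) :=
            ipass_bot 0 0 (M'+1) sT
          have hcomm : istep p 0 0 sT = ipass p 1 1 (M'+1) (istep p 0 0 sD) := by
            rw [hsTd, ← ipass_istep_comm (by omega) (by omega)]
          set s0 := istep p 0 0 sD with hs0
          have hyp0 : s0.2 1 ≤ s0.2 0 := by
            have e1 : s0.2 1 = s.2 1 := by rw [hs0, istep_snd_ne (by omega), hsD2]
            have e2 : s0.2 0 = (istep p 0 0 sT).2 0 := by
              rw [hcomm, ipass_snd_untouched (by omega : (0:ℕ) ≠ 1)]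
            rw [e1, e2]
            exact hd0'
          have hcoup := coupI (p := p) (M'+1) s0 hyp0
          have hfin : ipass p 0 0 (M'+1+1) sT
              = ipass p 1 0 (M'+1) (ipass p 1 1 (M'+1) s0) := by
            rw [hbot, hcomm]
          rw [hfin]
          have e3 : (ipass p 1 0 (M'+1) (ipass p 1 1 (M'+1) s0)).2 1
              = (ipass p 1 1 (M'+1) s0).2 1 := ipass_snd_untouched (by omega) _
          rw [e3]
          exact hcoup

end Serg

namespace Serg

lemma colPairs_eq_range (j k : ℕ) :
    ((List.range k).reverse).map (fun i => (i, j)) = colPairs 0 j k := by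
  induction k with
  | zero => rfl
  | succ k ih =>
    rw [List.range_succ, List.reverse_append, colPairs_zero_succ, ← ih]
    rfl

lemma order1_proj (M : ℕ) :
    (order1 M).map (fun q => ((q.1 : ℕ), (q.2 : ℕ))) = ordL M := by
  induction M with
  | zero => rfl
  | succ M ih =>
    rw [order1, List.map_flatMap]
    set R := (List.finRange (M+1)).reverse with hR
    rw [List.finRange_succ, List.flatMap_cons, List.flatMap_map, ordL_succ]
    have hA : ((R.filter fun i => (0 : Fin (M+1)) ≤ i).map
        (fun i => (i, Fin.castSucc (0 : Fin (M+1))))).map (fun q => ((q.1 : ℕ), (q.2 : ℕ)))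
        = colPairs 0 0 (M+1) := by
      have h0 : (R.filter fun i => (0 : Fin (M+1)) ≤ i) = R := by
        apply List.filter_eq_self.2
        intro a _
        exact decide_eq_true (Fin.zero_le a)
      rw [h0, hR, List.map_map, ← colPairs_eq_range, ← (show (List.finRange (M+1)).map (fun i : Fin (M+1) => (i : ℕ)) = List.range (M+1) from
          List.ext_getElem (by simp) (by simp)),
        ← List.map_reverse, List.map_map]
      apply List.map_congr_left
      intro i _
      rfl
    have hB : ∀ j : Fin M,
        ((R.filter fun i => j.succ ≤ i).map
          (fun i => (i, Fin.castSucc j.succ))).map (fun q => ((q.1 : ℕ), (q.2 : ℕ)))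
        = ((((List.finRange M).reverse.filter fun i => j ≤ i).map
          (fun i => (i, Fin.castSucc j))).map (fun q => ((q.1 : ℕ), (q.2 : ℕ)))).map sh := by
      intro j
      have h1 : (R.filter fun i => j.succ ≤ i)
          = (((List.finRange M).reverse.filter fun i => j ≤ i)).map Fin.succ := by
        have h1' : ((List.finRange (M+1)).filter fun i => j.succ ≤ i)
            = ((List.finRange M).filter fun i => j ≤ i).map Fin.succ := by
          rw [List.finRange_succ,
            List.filter_cons_of_neg (by simp [Fin.le_def]), List.filter_map]
          congr 1
          apply List.filter_congr
          intro i _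
          show decide (j.succ ≤ i.succ) = decide (j ≤ i)
          simp [Fin.succ_le_succ_iff]
        rw [hR, List.filter_reverse, List.filter_reverse, h1', List.map_reverse]
      rw [h1, List.map_map, List.map_map, List.map_map, List.map_map]
      apply List.map_congr_left
      intro i _
      rfl
    rw [hA]
    congr 1
    rw [← ih, order1, List.map_flatMap, List.map_flatMap]
    exact List.flatMap_congr fun j _ => hB j

variable {M N : ℕ}

/-- Extend a `Fin`-indexed state to an `ℕ`-indexed state by `0`. -/
def extSt (s : NState M N) : St :=
  (fun n => if h : n < M then s.1 ⟨n, h⟩ else 0,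
   fun n => if h : n < N then s.2 ⟨n, h⟩ else 0)

lemma extSt_fst' (s : NState M N) {n : ℕ} (hn : n < M) : (extSt s).1 n = s.1 ⟨n, hn⟩ :=
  dif_pos hn

lemma extSt_snd' (s : NState M N) {n : ℕ} (hn : n < N) : (extSt s).2 n = s.2 ⟨n, hn⟩ :=
  dif_pos hn

lemma extSt_fst (s : NState M N) (i : Fin M) : (extSt s).1 i.1 = s.1 i := by
  rw [extSt_fst' s i.isLt]

lemma extSt_snd (s : NState M N) (j : Fin N) : (extSt s).2 j.1 = s.2 j := by
  rw [extSt_snd' s j.isLt]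

lemma extSt_inj {a b : NState M N} (h : extSt a = extSt b) : a = b := by
  ext i
  · rw [← extSt_fst a i, ← extSt_fst b i, h]
  · rw [← extSt_snd a i, ← extSt_snd b i, h]

lemma extSt_nStep (p : ℕ) (s : NState M N) (i : Fin M) (j : Fin N) :
    extSt (nStep p M N (i, j) s) = step p i.1 j.1 (extSt s) := by
  unfold nStep step
  rw [extSt_fst, extSt_snd]
  split_ifs with h
  · rfl
  · ext n
    · show (extSt (Function.update s.1 i (s.1 i - 1), Function.update s.2 j (s.2 j + 1))).1 n
        = Function.update (extSt s).1 i.1 (s.1 i - 1) n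
      rw [Function.update_apply]
      by_cases hn : n = i.1
      · subst hn
        rw [if_pos rfl]
        show (if h : (i:ℕ) < M then Function.update s.1 i (s.1 i - 1) ⟨i.1, h⟩ else 0) = s.1 i - 1
        rw [dif_pos i.isLt]
        simp
      · rw [if_neg hn]
        show (if h : n < M then Function.update s.1 i (s.1 i - 1) ⟨n, h⟩ else 0) = (extSt s).1 n
        by_cases hm : n < M
        · rw [dif_pos hm, Function.update_of_ne (fun hc => hn (by rw [← hc]) ), extSt_fst' s hm]
        · rw [dif_neg hm]
          show (0:ℤ) = if h : n < M then s.1 ⟨n, h⟩ else 0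
          rw [dif_neg hm]
    · show (extSt (Function.update s.1 i (s.1 i - 1), Function.update s.2 j (s.2 j + 1))).2 n
        = Function.update (extSt s).2 j.1 (s.2 j + 1) n
      rw [Function.update_apply]
      by_cases hn : n = j.1
      · subst hn
        rw [if_pos rfl]
        show (if h : (j:ℕ) < N then Function.update s.2 j (s.2 j + 1) ⟨j.1, h⟩ else 0) = s.2 j + 1
        rw [dif_pos j.isLt]
        simp
      · rw [if_neg hn]
        show (if h : n < N then Function.update s.2 j (s.2 j + 1) ⟨n, h⟩ else 0) = (extSt s).2 n
        by_cases hm : n < N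
        · rw [dif_pos hm, Function.update_of_ne (fun hc => hn (by rw [← hc])), extSt_snd' s hm]
        · rw [dif_neg hm]
          show (0:ℤ) = if h : n < N then s.2 ⟨n, h⟩ else 0
          rw [dif_neg hm]

lemma extSt_foldl (p : ℕ) (l : List (Fin M × Fin N)) (s : NState M N) :
    extSt (l.foldl (fun s ij => nStep p M N ij s) s)
      = runL p (l.map fun ij => ((ij.1 : ℕ), (ij.2 : ℕ))) (extSt s) := by
  induction l generalizing s with
  | nil => rfl
  | cons q l ih =>
    obtain ⟨i, j⟩ := q
    rw [List.foldl_cons, List.map_cons, ih]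
    show runL p _ (extSt (nStep p M N (i, j) s)) = runL p _ (step p i.1 j.1 (extSt s))
    rw [extSt_nStep]

lemma extSt_Shat (p : ℕ) (h : M + 1 ≤ N) (s : NState M N) :
    extSt (Shat p M N h s) = runL p (ordL M) (extSt s) := by
  unfold Shat
  rw [extSt_foldl, List.map_map, ← order1_proj]
  have : ((order1 M).map ((fun (ij : Fin M × Fin N) => ((ij.1 : ℕ), (ij.2 : ℕ))) ∘
      (fun ij => (ij.1, Fin.castLE h ij.2))))
      = (order1 M).map (fun q => ((q.1 : ℕ), (q.2 : ℕ))) :=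
    List.map_congr_left (fun q _ => rfl)
  rw [this]

lemma antitone_iff_adj {K : ℕ} (f : Fin K → ℤ) :
    Antitone f ↔ ∀ i (hi : i+1 < K), f ⟨i+1, hi⟩ ≤ f ⟨i, by omega⟩ := by
  constructor
  · intro h i hi
    exact h (show (⟨i, by omega⟩ : Fin K) ≤ ⟨i+1, hi⟩ by rw [Fin.le_def]; exact Nat.le_succ i)
  · intro h a b hab
    have key : ∀ k (a : ℕ) (hak : a + k < K), f ⟨a+k, hak⟩ ≤ f ⟨a, by omega⟩ := by
      intro k
      induction k with
      | zero => intro a hak; exact le_of_eq rfl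
      | succ k ihk =>
        intro a hak
        have h1 : f ⟨a+(k+1), hak⟩ ≤ f ⟨a+k, by omega⟩ := h (a+k) (by omega)
        exact le_trans h1 (ihk a (by omega))
    have h2 := key (b.1 - a.1) a.1 (by omega)
    have h3 : b = ⟨a.1 + (b.1 - a.1), by omega⟩ := by
      apply Fin.ext
      simp only []
      omega
    rw [h3]
    exact h2

lemma domAhat_iff (x : NState M N) : x ∈ domAhat M N ↔ AsetN M N (extSt x) := by
  unfold domAhat AsetN
  rw [Set.mem_setOf_eq, antitone_iff_adj x.1, antitone_iff_adj x.2]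
  constructor
  · rintro ⟨h1, h2⟩
    constructor
    · intro i hi
      rw [extSt_fst' x hi, extSt_fst' x (show i < M by omega)]
      exact h1 i hi
    · intro j hj
      rw [extSt_snd' x hj, extSt_snd' x (show j < N by omega)]
      exact h2 j hj
  · rintro ⟨h1, h2⟩
    constructor
    · intro i hi
      have := h1 i hi
      rw [extSt_fst' x hi, extSt_fst' x (show i < M by omega)] at this
      exact this
    · intro j hj
      have := h2 j hj
      rw [extSt_snd' x hj, extSt_snd' x (show j < N by omega)] at this
      exact this

lemma setMhat_iff (p : ℕ) (h : M + 1 ≤ N) (x : NState M N) :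
    x ∈ setMhat p M N h ↔ MsetN p M N (extSt x) := by
  unfold setMhat MsetN
  rw [Set.mem_setOf_eq]
  have hd := domAhat_iff x
  unfold domAhat AsetN at hd
  rw [Set.mem_setOf_eq] at hd
  constructor
  · rintro ⟨h1, h2, h3, h4⟩
    refine ⟨hd.1 ⟨h1, h2⟩, ?_, ?_⟩
    · intro i hi heq
      rw [extSt_snd' x (by omega), extSt_fst' x hi]
      rw [extSt_snd' x (show i < N by omega), extSt_snd' x (show i+1 < N by omega)] at heq
      exact h3 i hi heq
    · intro i hi heq
      rw [extSt_snd' x (show i+1 < N by omega), extSt_fst' x hi]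
      rw [extSt_fst' x (show i < M by omega), extSt_fst' x hi] at heq
      exact h4 i hi heq
  · rintro ⟨hA, h3, h4⟩
    have := hd.2 hA
    refine ⟨this.1, this.2, ?_, ?_⟩
    · intro i hi heq
      have := h3 i hi (by
        rw [extSt_snd' x (show i < N by omega), extSt_snd' x (show i+1 < N by omega)]
        exact heq)
      rw [extSt_snd' x (show i < N by omega), extSt_fst' x hi] at this
      exact this
    · intro i hi heq
      have := h4 i hi (by
        rw [extSt_fst' x (show i < M by omega), extSt_fst' x hi]
        exact heq)
      rw [extSt_snd' x (show i+1 < N by omega), extSt_fst' x hi] at this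
      exact this

/-- Restrict an `ℕ`-indexed state to a `Fin`-indexed one. -/
def resSt (t : St) : NState M N := (fun i => t.1 i.1, fun j => t.2 j.1)

lemma extSt_resSt (t : St) (h1 : ∀ n, M ≤ n → t.1 n = 0) (h2 : ∀ n, N ≤ n → t.2 n = 0) :
    extSt (resSt t : NState M N) = t := by
  ext n
  · show (if h : n < M then t.1 n else 0) = t.1 n
    split_ifs with h
    · rfl
    · exact (h1 n (by omega)).symm
  · show (if h : n < N then t.2 n else 0) = t.2 n
    split_ifs with h
    · rfl
    · exact (h2 n (by omega)).symm

end Serg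

open Serg in
/-- For `N > M + 1`, the extended Serganova map satisfies
`Ŝ(Â) = 𝕄̂`. -/
theorem serganova_image_eq_general (p M N : ℕ) (hp : p.Prime) (hN : M + 1 < N) :
    Shat p M N hN.le '' domAhat M N = setMhat p M N hN.le := by
  apply Set.eq_of_subset_of_subset
  · rintro x ⟨a, ha, rfl⟩
    rw [setMhat_iff p hN.le, extSt_Shat p hN.le a]
    exact thmF M N (extSt a) hN.le ((domAhat_iff a).1 ha)
  · intro x hx
    have hA : AsetN M N (irunL p (ordL M).reverse (extSt x)) :=
      thmB M N (extSt x) hN.le ((setMhat_iff p hN.le x).1 hx)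
    have hz1 : ∀ n, M ≤ n → (irunL p (ordL M).reverse (extSt x)).1 n = 0 := by
      intro n hn
      rw [irunL_fst_untouched (fun q hq => by
        have := mem_ordL (List.mem_reverse.1 hq); omega)]
      exact dif_neg (by omega)
    have hz2 : ∀ n, N ≤ n → (irunL p (ordL M).reverse (extSt x)).2 n = 0 := by
      intro n hn
      rw [irunL_snd_untouched (fun q hq => by
        have := mem_ordL (List.mem_reverse.1 hq); omega)]
      exact dif_neg (by omega)
    have hres : extSt (resSt (irunL p (ordL M).reverse (extSt x)) : NState M N)
        = irunL p (ordL M).reverse (extSt x) := extSt_resSt _ hz1 hz2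
    refine ⟨resSt (irunL p (ordL M).reverse (extSt x)), ?_, ?_⟩
    · rw [domAhat_iff, hres]
      exact hA
    · apply extSt_inj
      rw [extSt_Shat, hres]
      exact runL_irunL (ordL M) (extSt x)
end

section
/- Let p be a prime and M ≥ 1 an integer, and let (λ,θ) ∈ A. Suppose Version 1 of the Serganova algorithm is applied to (λ,θ), and let i with 1 ≤ i ≤ M be fixed. After the step processing the pair (i,i) (the last step of the Version 1 order whose first index equals i), the entries λ_{i−1} (if i ≥ 2), λ_i, and θ_i are never modified by any later step; consequently their values after step (i,i) equal the corresponding entries of S₁(λ,θ). -/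
open Function

/-- The number of steps of the Version 1 order up to and including the step processing
the (0-based) pair `(a, a)` (the paper's pair `(i,i)` with `i = a+1`). -/
def stepIndex (M : ℕ) (a : Fin M) : ℕ := (order1 M).idxOf (a, a.castSucc) + 1

/-- The state of the Version 1 algorithm just after the step processing the
(0-based) pair `(a, a)`. -/
def midState (p M : ℕ) (a : Fin M) (s : SState M) : SState M :=
  sRun p M ((order1 M).take (stepIndex M a)) s

section SerganovaAux

lemma mem_take_finRange {M k : ℕ} {x : Fin M} (h : x ∈ (List.finRange M).take k) :
    (x : ℕ) < k := by
  rw [List.mem_iff_getElem] at h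
  obtain ⟨i, hi, hx⟩ := h
  rw [List.getElem_take, List.getElem_finRange] at hx
  subst hx
  simp only [List.length_take, List.length_finRange, lt_min_iff] at hi
  simpa using hi.1

lemma mem_drop_finRange {M k : ℕ} {x : Fin M} (h : x ∈ (List.finRange M).drop k) :
    k ≤ (x : ℕ) := by
  rw [List.mem_iff_getElem] at h
  obtain ⟨i, hi, hx⟩ := h
  rw [List.getElem_drop, List.getElem_finRange] at hx
  subst hx
  simp

lemma filter_finRange {M : ℕ} (a : Fin M) :
    ((List.finRange M).filter fun i => a ≤ i) = (List.finRange M).drop a := by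
  conv_lhs => rw [← List.take_append_drop (a : ℕ) (List.finRange M)]
  rw [List.filter_append, List.filter_eq_nil_iff.mpr, List.filter_eq_self.mpr,
    List.nil_append]
  · intro x hx
    simp only [decide_eq_true_eq]
    exact_mod_cast mem_drop_finRange hx
  · intro x hx
    have := mem_take_finRange hx
    simp only [decide_eq_true_eq]
    intro hle
    exact absurd (Fin.le_def.mp hle) (by omega)

lemma drop_finRange_eq {M : ℕ} (a : Fin M) :
    (List.finRange M).drop (a : ℕ) = a :: (List.finRange M).drop ((a : ℕ) + 1) := by
  rw [List.drop_eq_getElem_cons (by simp [a.isLt]), List.getElem_finRange]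
  simp

lemma sRun_fst_eq (p M : ℕ) (l : List (Fin M × Fin (M + 1))) (s : SState M) (b : Fin M)
    (h : ∀ ij ∈ l, ij.1 ≠ b) : (sRun p M l s).1 b = s.1 b := by
  induction l generalizing s with
  | nil => rfl
  | cons ij l ih =>
    have h1 : sRun p M (ij :: l) s = sRun p M l (sStep p M ij s) := rfl
    rw [h1, ih _ fun x hx => h x (List.mem_cons_of_mem _ hx)]
    unfold sStep
    split
    · rfl
    · exact Function.update_of_ne (Ne.symm (h ij List.mem_cons_self)) _ _

lemma sRun_snd_eq (p M : ℕ) (l : List (Fin M × Fin (M + 1))) (s : SState M)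
    (c : Fin (M + 1)) (h : ∀ ij ∈ l, ij.2 ≠ c) : (sRun p M l s).2 c = s.2 c := by
  induction l generalizing s with
  | nil => rfl
  | cons ij l ih =>
    have h1 : sRun p M (ij :: l) s = sRun p M l (sStep p M ij s) := rfl
    rw [h1, ih _ fun x hx => h x (List.mem_cons_of_mem _ hx)]
    unfold sStep
    split
    · rfl
    · exact Function.update_of_ne (Ne.symm (h ij List.mem_cons_self)) _ _

lemma sRun_append (p M : ℕ) (l1 l2 : List (Fin M × Fin (M + 1))) (s : SState M) :
    sRun p M (l1 ++ l2) s = sRun p M l2 (sRun p M l1 s) :=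
  List.foldl_append

lemma indexOf_concat {α : Type*} [BEq α] [LawfulBEq α] (x : α) (Q : List α) :
    ∀ P : List α, x ∉ P → (P ++ x :: Q).idxOf x = P.length
  | [], _ => by simp [List.idxOf_cons]
  | y :: P, h => by
    have h1 : (y == x) = false := beq_eq_false_iff_ne.mpr fun hyx => h (by simp [hyx])
    have h2 : x ∉ P := fun hx => h (List.mem_cons_of_mem _ hx)
    rw [List.cons_append, List.idxOf_cons, h1, indexOf_concat x Q P h2]
    rfl

-- the main structural lemma
lemma order1_decomp (M : ℕ) (a : Fin M) :
    (order1 M).take (stepIndex M a) ++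
      (((List.finRange M).drop ((a : ℕ) + 1)).flatMap fun j =>
        ((List.finRange M).reverse.filter fun i => j ≤ i).map fun i => (i, j.castSucc))
      = order1 M ∧
    ∀ ij ∈ ((List.finRange M).drop ((a : ℕ) + 1)).flatMap fun j =>
        ((List.finRange M).reverse.filter fun i => j ≤ i).map fun i => (i, j.castSucc),
      (a : ℕ) < (ij.1 : ℕ) ∧ (a : ℕ) < (ij.2 : ℕ) := by
  classical
  set f : Fin M → List (Fin M × Fin (M + 1)) := fun j =>
    ((List.finRange M).reverse.filter fun i => j ≤ i).map fun i => (i, j.castSucc) with hf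
  have hQ : ∀ ij ∈ ((List.finRange M).drop ((a : ℕ) + 1)).flatMap f,
      (a : ℕ) < (ij.1 : ℕ) ∧ (a : ℕ) < (ij.2 : ℕ) := by
    intro ij hij
    rw [List.mem_flatMap] at hij
    obtain ⟨j, hj, hij⟩ := hij
    have hja : (a : ℕ) + 1 ≤ (j : ℕ) := mem_drop_finRange hj
    rw [hf] at hij
    simp only [List.mem_map, List.mem_filter] at hij
    obtain ⟨i, ⟨_, hji⟩, rfl⟩ := hij
    have h3 : j ≤ i := of_decide_eq_true hji
    have h4 : (j : ℕ) ≤ (i : ℕ) := Fin.le_def.mp h3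
    exact ⟨by show (a : ℕ) < (i : ℕ); omega, by show (a : ℕ) < (j.castSucc : ℕ); rw [Fin.coe_castSucc]; omega⟩
  refine ⟨?_, hQ⟩
  -- block for j = a splits off its last element (a, a.castSucc)
  have hfa : f a = (((List.finRange M).drop ((a : ℕ) + 1)).reverse.map
      fun i => (i, a.castSucc)) ++ [(a, a.castSucc)] := by
    rw [hf]
    simp only
    rw [List.filter_reverse, filter_finRange, drop_finRange_eq, List.reverse_cons,
      List.map_append]
    simp
  have hsplit : order1 M = ((List.finRange M).take ((a : ℕ) + 1)).flatMap f ++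
      ((List.finRange M).drop ((a : ℕ) + 1)).flatMap f := by
    rw [order1, ← hf, ← List.flatMap_append, List.take_append_drop]
  have htake : ((List.finRange M).take ((a : ℕ) + 1)).flatMap f =
      ((List.finRange M).take (a : ℕ)).flatMap f ++ f a := by
    rw [List.take_succ]
    have : (List.finRange M)[(a : ℕ)]? = some a := by
      rw [List.getElem?_eq_getElem (by simp [a.isLt]), List.getElem_finRange]
      simp
    rw [this]
    simp
  -- P := prefix before (a, a.castSucc)
  set P : List (Fin M × Fin (M + 1)) := ((List.finRange M).take (a : ℕ)).flatMap f ++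
    (((List.finRange M).drop ((a : ℕ) + 1)).reverse.map fun i => (i, a.castSucc)) with hP
  have horder : order1 M = P ++ (a, a.castSucc) ::
      ((List.finRange M).drop ((a : ℕ) + 1)).flatMap f := by
    rw [hsplit, htake, hfa, hP]
    simp
  have hnotP : (a, a.castSucc) ∉ P := by
    rw [hP]
    intro hmem
    rw [List.mem_append] at hmem
    rcases hmem with hmem | hmem
    · rw [List.mem_flatMap] at hmem
      obtain ⟨j, hj, hij⟩ := hmem
      have hja : (j : ℕ) < (a : ℕ) := mem_take_finRange hj
      rw [hf] at hij
      simp only [List.mem_map, List.mem_filter] at hij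
      obtain ⟨i, _, hi⟩ := hij
      have h2 : j.castSucc = a.castSucc := congrArg Prod.snd hi
      have : (j : ℕ) = (a : ℕ) := congrArg Fin.val (Fin.castSucc_inj.mp h2)
      omega
    · simp only [List.mem_map, List.mem_reverse] at hmem
      obtain ⟨i, hi, heq⟩ := hmem
      have hia : (a : ℕ) + 1 ≤ (i : ℕ) := mem_drop_finRange hi
      have : (i : ℕ) = (a : ℕ) := congrArg Fin.val (congrArg Prod.fst heq)
      omega
  have hidx : (order1 M).idxOf (a, a.castSucc) = P.length := by
    rw [horder]
    exact indexOf_concat _ _ _ hnotP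
  rw [stepIndex, hidx]
  conv_lhs => rw [horder]
  conv_rhs => rw [horder]
  have hconcat : P ++ (a, a.castSucc) :: ((List.finRange M).drop ((a : ℕ) + 1)).flatMap f
      = (P ++ [(a, a.castSucc)]) ++ ((List.finRange M).drop ((a : ℕ) + 1)).flatMap f := by
    simp
  rw [hconcat, List.take_left' (by simp)]

end SerganovaAux

/-- Fix `i` with `1 ≤ i ≤ M` (0-based: `a = i - 1`). After the step of
Version 1 processing the pair `(i,i)`, the entries `λ_{i-1}` (if `i ≥ 2`), `λ_i` and `θ_i`
are never modified by any later step; consequently their values after that step equal the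
corresponding entries of `S₁(λ,θ)`. -/
theorem serganova_v1_frozen_entries (p M : ℕ) (hp : p.Prime) (hM : 1 ≤ M)
    (s : SState M) (hs : s ∈ domA M) (a : Fin M) :
    (∀ m : ℕ, stepIndex M a ≤ m →
      (sRun p M ((order1 M).take m) s).1 a = (midState p M a s).1 a ∧
      (0 < (a : ℕ) →
        (sRun p M ((order1 M).take m) s).1
            ⟨(a : ℕ) - 1, Nat.lt_of_le_of_lt (Nat.sub_le _ _) a.isLt⟩ =
          (midState p M a s).1 ⟨(a : ℕ) - 1, Nat.lt_of_le_of_lt (Nat.sub_le _ _) a.isLt⟩) ∧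
      (sRun p M ((order1 M).take m) s).2 a.castSucc = (midState p M a s).2 a.castSucc) ∧
    (S1 p M s).1 a = (midState p M a s).1 a ∧
    (0 < (a : ℕ) →
      (S1 p M s).1 ⟨(a : ℕ) - 1, Nat.lt_of_le_of_lt (Nat.sub_le _ _) a.isLt⟩ =
        (midState p M a s).1 ⟨(a : ℕ) - 1, Nat.lt_of_le_of_lt (Nat.sub_le _ _) a.isLt⟩) ∧
    (S1 p M s).2 a.castSucc = (midState p M a s).2 a.castSucc := by
  obtain ⟨hsplit, hQ⟩ := order1_decomp M a
  -- the suffix after step (a,a) is exactly the drop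
  have hdrop : ∀ ij ∈ (order1 M).drop (stepIndex M a),
      (a : ℕ) < (ij.1 : ℕ) ∧ (a : ℕ) < (ij.2 : ℕ) := by
    have h1 : (order1 M).take (stepIndex M a) ++ (order1 M).drop (stepIndex M a)
        = order1 M := List.take_append_drop _ _
    have h2 : (order1 M).drop (stepIndex M a) =
        ((List.finRange M).drop ((a : ℕ) + 1)).flatMap fun j =>
          ((List.finRange M).reverse.filter fun i => j ≤ i).map fun i =>
            (i, j.castSucc) := by
      have := hsplit.trans h1.symm
      exact (List.append_cancel_left this).symm
    rw [h2]
    exact hQ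
  have hfrozen : ∀ (l : List (Fin M × Fin (M + 1))),
      (∀ ij ∈ l, (a : ℕ) < (ij.1 : ℕ) ∧ (a : ℕ) < (ij.2 : ℕ)) → ∀ t : SState M,
      (sRun p M l t).1 a = t.1 a ∧
      (sRun p M l t).1 ⟨(a : ℕ) - 1, Nat.lt_of_le_of_lt (Nat.sub_le _ _) a.isLt⟩ =
        t.1 ⟨(a : ℕ) - 1, Nat.lt_of_le_of_lt (Nat.sub_le _ _) a.isLt⟩ ∧
      (sRun p M l t).2 a.castSucc = t.2 a.castSucc := by
    intro l hl t
    refine ⟨sRun_fst_eq p M l t _ ?_, sRun_fst_eq p M l t _ ?_, sRun_snd_eq p M l t _ ?_⟩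
    · intro ij hij
      exact Fin.ne_of_val_ne (by have := (hl ij hij).1; omega)
    · intro ij hij
      exact Fin.ne_of_val_ne (by have := (hl ij hij).1; simp only; omega)
    · intro ij hij
      refine Fin.ne_of_val_ne ?_
      rw [Fin.coe_castSucc]
      have := (hl ij hij).2
      omega
  constructor
  · intro m hm
    have hmeq : m = stepIndex M a + (m - stepIndex M a) := by omega
    rw [hmeq, List.take_add, sRun_append]
    have hmem : ∀ ij ∈ ((order1 M).drop (stepIndex M a)).take (m - stepIndex M a),
        (a : ℕ) < (ij.1 : ℕ) ∧ (a : ℕ) < (ij.2 : ℕ) :=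
      fun ij hij => hdrop ij (List.take_subset _ _ hij)
    have hmid : sRun p M ((order1 M).take (stepIndex M a)) s = midState p M a s := rfl
    rw [hmid]
    obtain ⟨h1, h2, h3⟩ := hfrozen _ hmem (midState p M a s)
    exact ⟨h1, fun _ => h2, h3⟩
  · have hS1 : S1 p M s = sRun p M ((order1 M).drop (stepIndex M a)) (midState p M a s) := by
      conv_lhs => rw [S1, ← List.take_append_drop (stepIndex M a) (order1 M)]
      rw [sRun_append]
      rfl
    rw [hS1]
    obtain ⟨h1, h2, h3⟩ := hfrozen _ hdrop (midState p M a s)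
    exact ⟨h1, fun _ => h2, h3⟩
end
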